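/- arXiv:1010.3875 — 8 statements merged into one kernel-verified Lean document; each statement's English description precedes it below -/
import Mathlib

section
/- Let $d \ge 1$ be an integer, $\alpha \in (d, d+2)$ and $R > 0$. For $t > 1$ set $r(t) = t^{(\alpha-d+2)/(4\alpha)}$. Then $\lim_{t \to \infty} \sup_{\mu \in \mathcal{P}(\bar B(0,R))} \; t^{-\frac{\alpha+d-2}{2\alpha}}\, r(t)^d \int_{\{|y| \le t^{(d+2-\alpha)/(4(\alpha+1))}\}} \bigl| e^{-t\,\hat v(r(t) y)} - e^{-t \int \hat v(r(t)(x-y))\,\mu(\mathrm{d}x)} \bigr|\,\mathrm{d}y = 0$. -/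
open MeasureTheory Real Filter
open scoped Classical Topology

/-- The shape function `v̂(y) = min(|y|^{-α}, 1)`, with `v̂(0) = 1`. -/
noncomputable def hatv (d : ℕ) (α : ℝ) (y : EuclideanSpace ℝ (Fin d)) : ℝ :=
  if y = 0 then 1 else min (‖y‖ ^ (-α)) 1

lemma hatv_nonneg (d : ℕ) (α : ℝ) (y : EuclideanSpace ℝ (Fin d)) : 0 ≤ hatv d α y := by
  unfold hatv; split
  · norm_num
  · exact le_min (Real.rpow_nonneg (norm_nonneg _) _) zero_le_one

lemma hatv_le_one (d : ℕ) (α : ℝ) (y : EuclideanSpace ℝ (Fin d)) : hatv d α y ≤ 1 := by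
  unfold hatv; split
  · exact le_rfl
  · exact min_le_right _ _

lemma hatv_lower (d : ℕ) {α : ℝ} (hα : 0 < α) {M : ℝ} (hM : 0 < M)
    (z : EuclideanSpace ℝ (Fin d)) (hz : ‖z‖ ≤ M) : min (M ^ (-α)) 1 ≤ hatv d α z := by
  unfold hatv; split
  · exact min_le_right _ _
  · rename_i h
    refine min_le_min ?_ le_rfl
    exact Real.rpow_le_rpow_of_nonpos (norm_pos_iff.mpr h) hz (neg_nonpos.mpr hα.le)

lemma hatv_measurable (d : ℕ) (α : ℝ) : Measurable (hatv d α) := by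
  have h : hatv d α = fun y => if y = (0 : EuclideanSpace ℝ (Fin d)) then 1
      else min (Real.exp (Real.log ‖y‖ * (-α))) 1 := by
    funext y; unfold hatv
    split
    · rfl
    · rename_i hy
      rw [Real.rpow_def_of_pos (norm_pos_iff.mpr hy)]
  rw [h]
  refine Measurable.ite ?_ measurable_const
    (((Real.measurable_log.comp measurable_norm).mul_const (-α)).exp.min measurable_const)
  simpa [Set.setOf_eq_eq_singleton] using
    measurableSet_singleton (0 : EuclideanSpace ℝ (Fin d))

/-- The contribution of small `y`'s to the functional `J_t` is negligible, uniformly over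
probability measures supported in the closed ball of radius `R`. -/
theorem stmt1 (d : ℕ) (hd : 1 ≤ d) (α R : ℝ) (hα₁ : (d : ℝ) < α) (hα₂ : α < d + 2)
    (hR : 0 < R) :
    ∀ ε > 0, ∃ T : ℝ, ∀ t ≥ T,
      ∀ μ : Measure (EuclideanSpace ℝ (Fin d)), IsProbabilityMeasure μ →
        μ (Metric.closedBall (0 : EuclideanSpace ℝ (Fin d)) R)ᶜ = 0 →
        t ^ (-(α + d - 2) / (2 * α)) * (t ^ ((α - d + 2) / (4 * α))) ^ (d : ℕ) *
            (∫ y in {y : EuclideanSpace ℝ (Fin d) |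
                ‖y‖ ≤ t ^ ((d + 2 - α) / (4 * (α + 1)))},
              |Real.exp (-(t * hatv d α ((t ^ ((α - d + 2) / (4 * α))) • y))) -
               Real.exp (-(t * ∫ x, hatv d α ((t ^ ((α - d + 2) / (4 * α))) • (x - y)) ∂μ))|)
          < ε := by
  intro ε hε
  have hd1 : (1 : ℝ) ≤ (d : ℝ) := by exact_mod_cast hd
  have hα0 : (0 : ℝ) < α := lt_of_lt_of_le (by linarith) hα₁.le
  set a : ℝ := (α - d + 2) / (4 * α) with ha_def
  set b : ℝ := (d + 2 - α) / (4 * (α + 1)) with hb_def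
  have ha : 0 < a := div_pos (by linarith) (by linarith)
  have hb : 0 < b := div_pos (by linarith) (by linarith)
  have hb1 : b ≤ 1 := by
    rw [hb_def, div_le_one (by linarith)]; linarith
  set c₀ : ℝ := (R + 1) ^ (-α) with hc₀_def
  have hc₀ : 0 < c₀ := Real.rpow_pos_of_pos (by linarith) _
  have hc₀1 : c₀ ≤ 1 := by
    calc c₀ ≤ (1 : ℝ) ^ (-α) :=
          Real.rpow_le_rpow_of_nonpos one_pos (by linarith) (by linarith)
      _ = 1 := Real.one_rpow _
  set C₁ : ℝ := (volume (Metric.ball (0 : EuclideanSpace ℝ (Fin d)) 1)).toReal with hC₁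
  set P : ℝ := -(α + d - 2) / (2 * α) + a * d + b * d with hP
  have hαne : α ≠ 0 := ne_of_gt hα0
  have hα1ne : α + 1 ≠ 0 := by positivity
  have hkey : ∀ t : ℝ, 0 < t → t * (t ^ (a + b)) ^ (-α) = t ^ b := by
    intro t ht
    rw [← Real.rpow_mul ht.le]
    rw [show t * t ^ ((a + b) * -α) = t ^ (1 + (a + b) * -α) by
      rw [Real.rpow_add ht, Real.rpow_one]]
    congr 1
    rw [ha_def, hb_def]
    field_simp
    ring
  -- the final tendsto fact
  have htend : Tendsto (fun t : ℝ => C₁ * (t ^ P * Real.exp (-(c₀ * t ^ b)))) atTop (𝓝 0) := by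
    have h1 := (tendsto_rpow_mul_exp_neg_mul_atTop_nhds_zero (P / b) c₀ hc₀).comp
      (tendsto_rpow_atTop hb)
    have h2 : Tendsto (fun t : ℝ => t ^ P * Real.exp (-(c₀ * t ^ b))) atTop (𝓝 0) := by
      apply h1.congr'
      filter_upwards [eventually_gt_atTop (0 : ℝ)] with t ht
      show (t ^ b) ^ (P / b) * Real.exp (-c₀ * t ^ b) = t ^ P * Real.exp (-(c₀ * t ^ b))
      rw [← Real.rpow_mul ht.le, show b * (P / b) = P from by field_simp, neg_mul]
    simpa using h2.const_mul C₁
  have hev : ∀ᶠ t : ℝ in atTop, C₁ * (t ^ P * Real.exp (-(c₀ * t ^ b))) < ε :=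
    htend.eventually (gt_mem_nhds hε)
  obtain ⟨T, hT⟩ := eventually_atTop.mp (hev.and (eventually_ge_atTop (1 : ℝ)))
  refine ⟨T, fun t ht μ hμprob hμsupp => ?_⟩
  obtain ⟨hsmall, ht1⟩ := hT t ht
  have ht0 : (0 : ℝ) < t := lt_of_lt_of_le one_pos ht1
  set r : ℝ := t ^ a with hr_def
  set ρ : ℝ := t ^ b with hρ_def
  have hr0 : 0 < r := Real.rpow_pos_of_pos ht0 a
  have hρ0 : 0 < ρ := Real.rpow_pos_of_pos ht0 b
  have hρ1 : 1 ≤ ρ := by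
    calc (1 : ℝ) = t ^ (0 : ℝ) := (Real.rpow_zero t).symm
      _ ≤ t ^ b := Real.rpow_le_rpow_of_exponent_le ht1 hb.le
  have htb_le_t : ρ ≤ t := by
    calc ρ ≤ t ^ (1 : ℝ) := Real.rpow_le_rpow_of_exponent_le ht1 hb1
      _ = t := Real.rpow_one t
  have hrρ : r * ρ = t ^ (a + b) := (Real.rpow_add ht0 a b).symm
  have hrρ0 : 0 < r * ρ := mul_pos hr0 hρ0
  -- key scalar bound
  have hbound : ∀ c : ℝ, c₀ ≤ c → c ≤ 1 → c₀ * ρ ≤ t * min (c * (r * ρ) ^ (-α)) 1 := by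
    intro c hc hc1
    rw [mul_min_of_nonneg _ _ ht0.le, mul_one]
    have hXpos : (0 : ℝ) ≤ (r * ρ) ^ (-α) := Real.rpow_nonneg hrρ0.le _
    have heq : t * (c * (r * ρ) ^ (-α)) = c * ρ := by
      rw [hrρ, mul_left_comm, hkey t ht0]
    refine le_min ?_ ?_
    · rw [heq]
      exact mul_le_mul_of_nonneg_right hc hρ0.le
    · calc c₀ * ρ ≤ 1 * ρ := mul_le_mul_of_nonneg_right hc₀1 hρ0.le
        _ = ρ := one_mul ρ
        _ ≤ t := htb_le_t
  have hbound1 : c₀ * ρ ≤ t * min ((r * ρ) ^ (-α)) 1 := by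
    have h := hbound 1 hc₀1 le_rfl
    rwa [one_mul] at h
  have hbound2 : c₀ * ρ ≤ t * min (((R + 1) * (r * ρ)) ^ (-α)) 1 := by
    rw [Real.mul_rpow (by linarith) hrρ0.le]
    exact hbound c₀ le_rfl hc₀1
  -- pointwise bound on the integrand
  have hpt : ∀ y : EuclideanSpace ℝ (Fin d), ‖y‖ ≤ ρ →
      |Real.exp (-(t * hatv d α (r • y))) -
        Real.exp (-(t * ∫ x, hatv d α (r • (x - y)) ∂μ))| ≤ Real.exp (-(c₀ * ρ)) := by
    intro y hy
    have h1 : Real.exp (-(t * hatv d α (r • y))) ≤ Real.exp (-(c₀ * ρ)) := by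
      apply Real.exp_le_exp.mpr
      apply neg_le_neg
      refine le_trans hbound1 (mul_le_mul_of_nonneg_left ?_ ht0.le)
      apply hatv_lower d hα0 hrρ0
      rw [norm_smul, Real.norm_eq_abs, abs_of_pos hr0]
      exact mul_le_mul_of_nonneg_left hy hr0.le
    have h2 : Real.exp (-(t * ∫ x, hatv d α (r • (x - y)) ∂μ)) ≤ Real.exp (-(c₀ * ρ)) := by
      apply Real.exp_le_exp.mpr
      apply neg_le_neg
      refine le_trans hbound2 (mul_le_mul_of_nonneg_left ?_ ht0.le)
      have hae : ∀ᵐ x ∂μ, ‖x‖ ≤ R := by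
        have h0 : ∀ᵐ x ∂μ, x ∈ Metric.closedBall (0 : EuclideanSpace ℝ (Fin d)) R := by
          rw [ae_iff]
          simpa [Set.compl_def] using hμsupp
        filter_upwards [h0] with x hx
        simpa [Metric.mem_closedBall, dist_zero_right] using hx
      have hmeas : Measurable (fun x : EuclideanSpace ℝ (Fin d) => hatv d α (r • (x - y))) :=
        (hatv_measurable d α).comp ((measurable_id.sub_const y).const_smul r)
      have hint : Integrable (fun x : EuclideanSpace ℝ (Fin d) => hatv d α (r • (x - y))) μ := by
        apply Integrable.mono' (integrable_const (1 : ℝ)) hmeas.aestronglyMeasurable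
        filter_upwards with x
        rw [Real.norm_eq_abs, abs_of_nonneg (hatv_nonneg _ _ _)]
        exact hatv_le_one _ _ _
      calc min (((R + 1) * (r * ρ)) ^ (-α)) 1
          = ∫ _x, min (((R + 1) * (r * ρ)) ^ (-α)) 1 ∂μ := by
            rw [integral_const]; simp [measure_univ]
        _ ≤ ∫ x, hatv d α (r • (x - y)) ∂μ := by
            apply integral_mono_ae (integrable_const _) hint
            filter_upwards [hae] with x hx
            apply hatv_lower d hα0 (by positivity)
            rw [norm_smul, Real.norm_eq_abs, abs_of_pos hr0]
            calc r * ‖x - y‖ ≤ r * (R + ρ) := by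
                  apply mul_le_mul_of_nonneg_left _ hr0.le
                  exact le_trans (norm_sub_le x y) (add_le_add hx hy)
              _ ≤ (R + 1) * (r * ρ) := by nlinarith [mul_le_mul_of_nonneg_left hρ1 (mul_nonneg hR.le hr0.le)]
    have e1 := Real.exp_pos (-(t * hatv d α (r • y)))
    have e2 := Real.exp_pos (-(t * ∫ x, hatv d α (r • (x - y)) ∂μ))
    rw [abs_sub_le_iff]
    constructor <;> linarith
  -- rewrite the domain as a closed ball
  have hSeq : {y : EuclideanSpace ℝ (Fin d) | ‖y‖ ≤ ρ}
      = Metric.closedBall (0 : EuclideanSpace ℝ (Fin d)) ρ := by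
    ext y; simp [Metric.mem_closedBall, dist_zero_right]
  rw [hSeq]
  have hvolfin : volume (Metric.closedBall (0 : EuclideanSpace ℝ (Fin d)) ρ) < ⊤ :=
    measure_closedBall_lt_top
  have hIb : (∫ y in Metric.closedBall (0 : EuclideanSpace ℝ (Fin d)) ρ,
      |Real.exp (-(t * hatv d α (r • y))) -
        Real.exp (-(t * ∫ x, hatv d α (r • (x - y)) ∂μ))|)
      ≤ Real.exp (-(c₀ * ρ)) *
        (volume (Metric.closedBall (0 : EuclideanSpace ℝ (Fin d)) ρ)).toReal := by
    refine le_trans (le_abs_self _) ?_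
    rw [← Real.norm_eq_abs]
    apply norm_setIntegral_le_of_norm_le_const_ae' hvolfin
    apply ae_of_all
    intro y hy
    rw [Real.norm_eq_abs, abs_abs]
    exact hpt y (by simpa [Metric.mem_closedBall, dist_zero_right] using hy)
  have hvol_eq : (volume (Metric.closedBall (0 : EuclideanSpace ℝ (Fin d)) ρ)).toReal
      = ρ ^ d * C₁ := by
    rw [Measure.addHaar_closedBall _ _ hρ0.le, finrank_euclideanSpace, Fintype.card_fin,
      ENNReal.toReal_mul, ENNReal.toReal_ofReal (by positivity)]
  rw [hvol_eq] at hIb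
  have hpre0 : (0 : ℝ) ≤ t ^ (-(α + ↑d - 2) / (2 * α)) * r ^ d := by positivity
  calc t ^ (-(α + ↑d - 2) / (2 * α)) * r ^ d *
        (∫ y in Metric.closedBall (0 : EuclideanSpace ℝ (Fin d)) ρ,
          |Real.exp (-(t * hatv d α (r • y))) -
            Real.exp (-(t * ∫ x, hatv d α (r • (x - y)) ∂μ))|)
      ≤ t ^ (-(α + ↑d - 2) / (2 * α)) * r ^ d * (Real.exp (-(c₀ * ρ)) * (ρ ^ d * C₁)) := by
        apply mul_le_mul_of_nonneg_left hIb hpre0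
    _ = C₁ * (t ^ P * Real.exp (-(c₀ * t ^ b))) := by
        have h1 : r ^ d = t ^ (a * (d : ℝ)) := by
          rw [hr_def, Real.rpow_mul ht0.le, Real.rpow_natCast]
        have h2 : ρ ^ d = t ^ (b * (d : ℝ)) := by
          rw [hρ_def, Real.rpow_mul ht0.le, Real.rpow_natCast]
        rw [h1, h2, hP, Real.rpow_add ht0, Real.rpow_add ht0, ← hρ_def]
        ring
    _ < ε := hsmall
end

section
/- Let $d \ge 1$ be an integer, $\alpha > d$ and $\nu > 0$, and set $a_1 = \nu\,\omega_d\,\Gamma\bigl(\tfrac{\alpha-d}{\alpha}\bigr)$. Then as $t \to \infty$, $\bigl| \nu \int_{\mathbb{R}^d} \bigl(1 - e^{-t\,\hat v(y)}\bigr)\,\mathrm{d}y - a_1\, t^{d/\alpha} \bigr| = O(e^{-t})$. -/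
open MeasureTheory Real Filter Asymptotics
open scoped Classical
open Set

lemma aux1 {x : ℝ} (hx : 0 ≤ x) :
    ENNReal.ofReal (1 - Real.exp (-x)) =
      ∫⁻ u in Ioi (0:ℝ), (Iio x).indicator (fun u => ENNReal.ofReal (Real.exp (-u))) u := by
  rw [lintegral_indicator measurableSet_Iio, Measure.restrict_restrict measurableSet_Iio]
  have hIoo : Iio x ∩ Ioi 0 = Ioo 0 x := by ext u; simp [and_comm]
  rw [hIoo]
  have hint : IntegrableOn (fun u => Real.exp (-u)) (Ioo 0 x) := by
    exact ((Real.continuous_exp.comp continuous_neg).integrableOn_Icc).mono_set Ioo_subset_Icc_self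
  rw [← ofReal_integral_eq_lintegral_ofReal hint]
  · congr 1
    rw [← integral_Ioc_eq_integral_Ioo, ← intervalIntegral.integral_of_le hx]
    have hder : ∀ u ∈ Set.uIcc (0:ℝ) x, HasDerivAt (fun u => -Real.exp (-u)) (Real.exp (-u)) u := by
      intro u _
      have h := ((hasDerivAt_id u).neg.exp).neg; simp only [id_eq, mul_neg, mul_one, neg_neg] at h; exact h
    rw [intervalIntegral.integral_eq_sub_of_hasDerivAt hder
      ((Real.continuous_exp.comp continuous_neg).intervalIntegrable 0 x)]
    simp; ring
  · filter_upwards with u using (Real.exp_pos _).le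

lemma aux2 {d : ℕ} {α t u : ℝ} (hα : 0 < α) (ht : 0 < t) (hu : 0 < u) :
    {y : EuclideanSpace ℝ (Fin d) | u < t * ‖y‖ ^ (-α)} =
      Metric.ball 0 ((t/u) ^ α⁻¹) \ {0} := by
  ext y
  simp only [mem_setOf_eq, mem_diff, Metric.mem_ball, dist_zero_right, mem_singleton_iff]
  rcases eq_or_ne y 0 with rfl | hy
  · simp [Real.zero_rpow (neg_ne_zero.2 hα.ne'), not_lt.2 hu.le]
  · have hny : 0 < ‖y‖ := norm_pos_iff.2 hy
    have hxα : 0 < ‖y‖ ^ α := Real.rpow_pos_of_pos hny α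
    have key : u < t * ‖y‖ ^ (-α) ↔ ‖y‖ ^ α < t / u := by
      rw [Real.rpow_neg hny.le, ← div_eq_mul_inv, lt_div_iff₀ hxα, lt_div_iff₀ hu,
        mul_comm]
    rw [key, ← Real.lt_rpow_inv_iff_of_pos hny.le (div_nonneg ht.le hu.le) hα]
    exact (and_iff_left hy).symm

lemma auxA (d : ℕ) (hd : 1 ≤ d) {α t : ℝ} (hα : (d:ℝ) < α) (ht : 0 < t) :
    ∫⁻ y : EuclideanSpace ℝ (Fin d), ENNReal.ofReal (1 - Real.exp (-(t * ‖y‖ ^ (-α)))) =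
      volume (Metric.ball (0 : EuclideanSpace ℝ (Fin d)) 1) *
        ENNReal.ofReal (Real.Gamma (1 - d/α) * t ^ ((d:ℝ)/α)) := by
  have hα0 : (0:ℝ) < α := lt_of_le_of_lt (by exact_mod_cast Nat.zero_le d) hα
  have hs : (0:ℝ) < 1 - d/α := by
    have : (d:ℝ)/α < 1 := (div_lt_one hα0).2 hα
    linarith
  haveI : Nontrivial (EuclideanSpace ℝ (Fin d)) := by
    apply Module.nontrivial_of_finrank_pos (R := ℝ)
    rw [finrank_euclideanSpace, Fintype.card_fin]
    exact hd
  set ωB := volume (Metric.ball (0 : EuclideanSpace ℝ (Fin d)) 1) with hωB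
  have hωtop : ωB ≠ ⊤ := (measure_ball_lt_top).ne
  calc ∫⁻ y : EuclideanSpace ℝ (Fin d), ENNReal.ofReal (1 - Real.exp (-(t * ‖y‖ ^ (-α))))
      = ∫⁻ y : EuclideanSpace ℝ (Fin d), ∫⁻ u in Ioi (0:ℝ),
          (Iio (t * ‖y‖ ^ (-α))).indicator (fun u => ENNReal.ofReal (Real.exp (-u))) u := by
        refine lintegral_congr fun y => aux1 ?_
        exact mul_nonneg ht.le (Real.rpow_nonneg (norm_nonneg y) _)
    _ = ∫⁻ u in Ioi (0:ℝ), ∫⁻ y : EuclideanSpace ℝ (Fin d),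
          (Iio (t * ‖y‖ ^ (-α))).indicator (fun u => ENNReal.ofReal (Real.exp (-u))) u := by
        apply lintegral_lintegral_swap
        have heq : (Function.uncurry fun (y : EuclideanSpace ℝ (Fin d)) (u : ℝ) =>
            (Iio (t * ‖y‖ ^ (-α))).indicator (fun u => ENNReal.ofReal (Real.exp (-u))) u)
            = fun p : EuclideanSpace ℝ (Fin d) × ℝ =>
              ({p : EuclideanSpace ℝ (Fin d) × ℝ | p.2 < t * ‖p.1‖ ^ (-α)}).indicator
                (fun p => ENNReal.ofReal (Real.exp (-p.2))) p := by
          ext p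
          by_cases h : p.2 < t * ‖p.1‖ ^ (-α) <;>
            simp [Function.uncurry, Set.indicator, h]
        rw [heq]
        refine (Measurable.indicator ?_ ?_).aemeasurable
        · exact ENNReal.measurable_ofReal.comp (Real.measurable_exp.comp measurable_snd.neg)
        · refine measurableSet_lt measurable_snd ?_
          have : Measurable fun p : EuclideanSpace ℝ (Fin d) × ℝ => t * ‖p.1‖ ^ (-α) := by
            fun_prop
          exact this
    _ = ∫⁻ u in Ioi (0:ℝ),
          (ENNReal.ofReal (t ^ ((d:ℝ)/α)) *
            ENNReal.ofReal (Real.exp (-u) * u ^ ((1 - (d:ℝ)/α) - 1))) * ωB := by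
        refine setLIntegral_congr_fun measurableSet_Ioi ?_
        intro u hu
        have hu0 : 0 < u := hu
        have hR : (0:ℝ) ≤ (t/u) ^ α⁻¹ := Real.rpow_nonneg (div_nonneg ht.le hu0.le) _
        have hset : ∀ y : EuclideanSpace ℝ (Fin d),
            (Iio (t * ‖y‖ ^ (-α))).indicator (fun _ => ENNReal.ofReal (Real.exp (-u))) u
            = ({y : EuclideanSpace ℝ (Fin d) | u < t * ‖y‖ ^ (-α)}).indicator
                (fun _ => ENNReal.ofReal (Real.exp (-u))) y := by
          intro y
          by_cases h : u < t * ‖y‖ ^ (-α) <;> simp [Set.indicator, h]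
        calc ∫⁻ y : EuclideanSpace ℝ (Fin d),
              (Iio (t * ‖y‖ ^ (-α))).indicator (fun u => ENNReal.ofReal (Real.exp (-u))) u
            = ∫⁻ y : EuclideanSpace ℝ (Fin d),
              ({y : EuclideanSpace ℝ (Fin d) | u < t * ‖y‖ ^ (-α)}).indicator
                (fun _ => ENNReal.ofReal (Real.exp (-u))) y := lintegral_congr hset
          _ = ENNReal.ofReal (Real.exp (-u)) *
                volume {y : EuclideanSpace ℝ (Fin d) | u < t * ‖y‖ ^ (-α)} := by
              rw [lintegral_indicator_const]
              rw [aux2 hα0 ht hu0]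
              exact (Metric.isOpen_ball.measurableSet).diff (measurableSet_singleton 0)
          _ = ENNReal.ofReal (Real.exp (-u)) *
                volume (Metric.ball (0 : EuclideanSpace ℝ (Fin d)) ((t/u) ^ α⁻¹)) := by
              rw [aux2 hα0 ht hu0, measure_diff_null (measure_singleton 0)]
          _ = ENNReal.ofReal (Real.exp (-u)) *
                (ENNReal.ofReal (((t/u) ^ α⁻¹) ^ Module.finrank ℝ (EuclideanSpace ℝ (Fin d))) * ωB) := by
              rw [Measure.addHaar_ball _ _ hR]
          _ = (ENNReal.ofReal (t ^ ((d:ℝ)/α)) *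
                ENNReal.ofReal (Real.exp (-u) * u ^ ((1 - (d:ℝ)/α) - 1))) * ωB := by
              rw [finrank_euclideanSpace, Fintype.card_fin]
              have h1 : ((t/u) ^ α⁻¹) ^ (d:ℕ) = t ^ ((d:ℝ)/α) * u ^ ((1 - (d:ℝ)/α) - 1) := by
                rw [← Real.rpow_natCast ((t/u) ^ α⁻¹) d,
                  ← Real.rpow_mul (div_nonneg ht.le hu0.le), inv_mul_eq_div,
                  Real.div_rpow ht.le hu0.le, div_eq_mul_inv, ← Real.rpow_neg hu0.le]
                ring_nf
              rw [h1, ← mul_assoc, ← ENNReal.ofReal_mul (Real.exp_pos _).le,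
                ← ENNReal.ofReal_mul (by positivity : (0:ℝ) ≤ t ^ ((d:ℝ)/α))]
              congr 1
              exact congrArg ENNReal.ofReal (by ring)
    _ = ENNReal.ofReal (t ^ ((d:ℝ)/α)) *
          (∫⁻ u in Ioi (0:ℝ), ENNReal.ofReal (Real.exp (-u) * u ^ ((1 - (d:ℝ)/α) - 1))) * ωB := by
        rw [lintegral_mul_const' _ _ hωtop, lintegral_const_mul' _ _ ENNReal.ofReal_ne_top]
    _ = ENNReal.ofReal (t ^ ((d:ℝ)/α)) * ENNReal.ofReal (Real.Gamma (1 - d/α)) * ωB := by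
        congr 2
        rw [Real.Gamma_eq_integral hs]
        rw [← ofReal_integral_eq_lintegral_ofReal (Real.GammaIntegral_convergent hs)]
        filter_upwards [ae_restrict_mem measurableSet_Ioi] with u hu
        have hu0 : (0:ℝ) < u := hu
        positivity
    _ = ωB * ENNReal.ofReal (Real.Gamma (1 - d/α) * t ^ ((d:ℝ)/α)) := by
        rw [ENNReal.ofReal_mul (Real.Gamma_pos_of_pos hs).le]
        ring

lemma auxB (d : ℕ) (hd : 1 ≤ d) {α t : ℝ} (hα : (d:ℝ) < α) (ht : 0 < t) :
    Integrable (fun y : EuclideanSpace ℝ (Fin d) => 1 - Real.exp (-(t * ‖y‖ ^ (-α)))) ∧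
    ∫ y : EuclideanSpace ℝ (Fin d), (1 - Real.exp (-(t * ‖y‖ ^ (-α)))) =
      (volume (Metric.ball (0 : EuclideanSpace ℝ (Fin d)) 1)).toReal *
        (Real.Gamma (1 - d/α) * t ^ ((d:ℝ)/α)) := by
  have hα0 : (0:ℝ) < α := lt_of_le_of_lt (by exact_mod_cast Nat.zero_le d) hα
  have hs : (0:ℝ) < 1 - d/α := by
    have : (d:ℝ)/α < 1 := (div_lt_one hα0).2 hα
    linarith
  have hnn : ∀ y : EuclideanSpace ℝ (Fin d), 0 ≤ 1 - Real.exp (-(t * ‖y‖ ^ (-α))) := by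
    intro y
    have h1 : Real.exp (-(t * ‖y‖ ^ (-α))) ≤ 1 := by
      rw [Real.exp_le_one_iff, neg_nonpos]
      exact mul_nonneg ht.le (Real.rpow_nonneg (norm_nonneg y) _)
    linarith
  have hmeas : Measurable (fun y : EuclideanSpace ℝ (Fin d) =>
      1 - Real.exp (-(t * ‖y‖ ^ (-α)))) := by fun_prop
  have hint : Integrable (fun y : EuclideanSpace ℝ (Fin d) =>
      1 - Real.exp (-(t * ‖y‖ ^ (-α)))) := by
    refine ⟨hmeas.aestronglyMeasurable, ?_⟩
    rw [hasFiniteIntegral_iff_ofReal (Filter.Eventually.of_forall hnn)]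
    rw [auxA d hd hα ht]
    exact ENNReal.mul_lt_top measure_ball_lt_top ENNReal.ofReal_lt_top
  refine ⟨hint, ?_⟩
  rw [integral_eq_lintegral_of_nonneg_ae (Filter.Eventually.of_forall hnn)
    hmeas.aestronglyMeasurable, auxA d hd hα ht, ENNReal.toReal_mul, ENNReal.toReal_ofReal]
  positivity

/-- `ν ∫ (1 - e^{-t v̂(y)}) dy = a₁ t^{d/α} + O(e^{-t})` as `t → ∞`, where
`a₁ = ν ω_d Γ((α-d)/α)`. -/
theorem stmt2 (d : ℕ) (hd : 1 ≤ d) (α ν : ℝ) (hα : (d : ℝ) < α) (hν : 0 < ν) :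
    (fun t : ℝ =>
        ν * (∫ y : EuclideanSpace ℝ (Fin d), (1 - Real.exp (-(t * hatv d α y))))
          - ν * (volume (Metric.ball (0 : EuclideanSpace ℝ (Fin d)) 1)).toReal *
              Real.Gamma ((α - d) / α) * t ^ ((d : ℝ) / α))
      =O[atTop] fun t => Real.exp (-t) := by
  have hα0 : (0:ℝ) < α := lt_of_le_of_lt (by exact_mod_cast Nat.zero_le d) hα
  haveI : Nontrivial (EuclideanSpace ℝ (Fin d)) := by
    apply Module.nontrivial_of_finrank_pos (R := ℝ)
    rw [finrank_euclideanSpace, Fintype.card_fin]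
    exact hd
  set ω : ℝ := (volume (Metric.ball (0 : EuclideanSpace ℝ (Fin d)) 1)).toReal with hω
  have hgam : Real.Gamma ((α - d) / α) = Real.Gamma (1 - d/α) := by
    congr 1
    field_simp
  have hhatv : Measurable (hatv d α) := by
    unfold hatv
    exact Measurable.ite (measurableSet_eq) measurable_const (by fun_prop)
  rw [isBigO_iff]
  refine ⟨ν * ω, ?_⟩
  filter_upwards [eventually_gt_atTop (0:ℝ)] with t ht
  set g : EuclideanSpace ℝ (Fin d) → ℝ := fun y => 1 - Real.exp (-(t * ‖y‖ ^ (-α))) with hgdef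
  set f : EuclideanSpace ℝ (Fin d) → ℝ := fun y => 1 - Real.exp (-(t * hatv d α y)) with hfdef
  have hf_meas : Measurable f := by
    apply Measurable.const_sub
    exact Real.measurable_exp.comp ((hhatv.const_mul t).neg)
  have hg_int := (auxB d hd hα ht).1
  have hg_val := (auxB d hd hα ht).2
  have hbound : ∀ᵐ y : EuclideanSpace ℝ (Fin d), ‖f y - g y‖ ≤
      (Metric.closedBall (0 : EuclideanSpace ℝ (Fin d)) 1).indicator
        (fun _ => Real.exp (-t)) y := by
    have h0 : ∀ᵐ y : EuclideanSpace ℝ (Fin d), y ∉ ({0} : Set (EuclideanSpace ℝ (Fin d))) :=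
      measure_eq_zero_iff_ae_notMem.mp (measure_singleton 0)
    filter_upwards [h0] with y hy
    replace hy : y ≠ 0 := by simpa using hy
    rcases lt_or_ge ‖y‖ 1 with hlt | hge
    · have h1 : hatv d α y = 1 := by
        unfold hatv
        rw [if_neg hy]
        exact min_eq_right (Real.one_le_rpow_of_pos_of_le_one_of_nonpos
          (norm_pos_iff.2 hy) hlt.le (neg_nonpos.2 hα0.le))
      have hx1 : (1:ℝ) ≤ ‖y‖ ^ (-α) := Real.one_le_rpow_of_pos_of_le_one_of_nonpos
          (norm_pos_iff.2 hy) hlt.le (neg_nonpos.2 hα0.le)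
      have hfg : f y - g y = Real.exp (-(t * ‖y‖ ^ (-α))) - Real.exp (-t) := by
        simp only [hfdef, hgdef, h1, mul_one]
        ring
      have hle : Real.exp (-(t * ‖y‖ ^ (-α))) ≤ Real.exp (-t) := by
        apply Real.exp_le_exp.2
        nlinarith
      have hmem : y ∈ Metric.closedBall (0 : EuclideanSpace ℝ (Fin d)) 1 := by
        simpa [Metric.mem_closedBall] using hlt.le
      rw [Set.indicator_of_mem hmem, hfg, Real.norm_eq_abs, abs_le]
      constructor <;> nlinarith [Real.exp_pos (-(t * ‖y‖ ^ (-α))), Real.exp_pos (-t)]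
    · have h1 : hatv d α y = ‖y‖ ^ (-α) := by
        unfold hatv
        rw [if_neg hy]
        exact min_eq_left (Real.rpow_le_one_of_one_le_of_nonpos hge (neg_nonpos.2 hα0.le))
      have : f y - g y = 0 := by simp [hfdef, hgdef, h1]
      rw [this]
      simpa using Set.indicator_nonneg (fun _ _ => (Real.exp_pos (-t)).le) y
  have hInd : Integrable ((Metric.closedBall (0 : EuclideanSpace ℝ (Fin d)) 1).indicator
      (fun _ => Real.exp (-t))) := by
    rw [integrable_indicator_iff measurableSet_closedBall]
    exact integrableOn_const measure_closedBall_lt_top.ne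
  have hh_int : Integrable (fun y => f y - g y) :=
    Integrable.mono' hInd (hf_meas.sub (by fun_prop)).aestronglyMeasurable hbound
  have hf_int : Integrable f := by
    have := hg_int.add hh_int
    refine this.congr (Filter.Eventually.of_forall fun y => ?_)
    simp only [Pi.add_apply, hgdef, hfdef]
    ring
  have hsub : ∫ y, (f y - g y) = (∫ y, f y) - ∫ y, g y := integral_sub hf_int hg_int
  have hIndval : ∫ y, (Metric.closedBall (0 : EuclideanSpace ℝ (Fin d)) 1).indicator
      (fun _ => Real.exp (-t)) y = ω * Real.exp (-t) := by
    rw [integral_indicator_const _ measurableSet_closedBall, smul_eq_mul,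
      Measure.real, Measure.addHaar_closedBall_eq_addHaar_ball]
  have hkey : ν * (∫ y, f y) - ν * ω * Real.Gamma ((α - d) / α) * t ^ ((d:ℝ)/α)
      = ν * ∫ y, (f y - g y) := by
    rw [hsub, hgam]
    rw [hg_val]
    ring
  rw [hkey, norm_mul, Real.norm_eq_abs ν, abs_of_pos hν,
    Real.norm_eq_abs (Real.exp _), abs_of_pos (Real.exp_pos _)]
  have h1 : ‖∫ y, (f y - g y)‖ ≤ ω * Real.exp (-t) := by
    calc ‖∫ y, (f y - g y)‖ ≤ ∫ y, ‖f y - g y‖ := norm_integral_le_integral_norm _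
      _ ≤ ∫ y, (Metric.closedBall (0 : EuclideanSpace ℝ (Fin d)) 1).indicator
            (fun _ => Real.exp (-t)) y := integral_mono_ae hh_int.norm hInd hbound
      _ = ω * Real.exp (-t) := hIndval
  have hω0 : 0 ≤ ω := ENNReal.toReal_nonneg
  calc ν * ‖∫ y, (f y - g y)‖ ≤ ν * (ω * Real.exp (-t)) := by
        exact mul_le_mul_of_nonneg_left h1 hν.le
    _ = ν * ω * Real.exp (-t) := by ring
end

section
/- Let $d \ge 1$ be an integer and $\alpha > d$. Then for every $t > 0$, $\int_{\mathbb{R}^d} \bigl(1 - e^{-t |y|^{-\alpha}}\bigr)\,\mathrm{d}y = \omega_d\,\Gamma\bigl(\tfrac{\alpha-d}{\alpha}\bigr)\, t^{d/\alpha}$. -/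
open MeasureTheory Real Filter
open scoped Classical

section Aux
open Set

lemma auxA_s3 (d : ℕ) (hd : 1 ≤ d) {α t : ℝ} (hα : (d : ℝ) < α) (ht : 0 < t) :
    IntegrableOn (fun r : ℝ => r ^ (d - 1) * (1 - Real.exp (-(t * r ^ (-α))))) (Ioi 0) := by
  have hmeas : AEStronglyMeasurable
      (fun r : ℝ => r ^ (d - 1) * (1 - Real.exp (-(t * r ^ (-α))))) (volume.restrict (Ioi (0:ℝ))) := by
    apply Measurable.aestronglyMeasurable
    fun_prop
  have h01 : IntegrableOn (fun r : ℝ => r ^ (d - 1) * (1 - Real.exp (-(t * r ^ (-α))))) (Ioc 0 1) := by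
    apply Integrable.mono' (g := fun _ : ℝ => (1:ℝ))
    · exact integrableOn_const measure_Ioc_lt_top.ne
    · exact hmeas.mono_measure (Measure.restrict_mono Ioc_subset_Ioi_self le_rfl)
    · filter_upwards [ae_restrict_mem measurableSet_Ioc] with r hr
      have hr0 : (0:ℝ) < r := hr.1
      have he : Real.exp (-(t * r ^ (-α))) ≤ 1 := by
        apply Real.exp_le_one_iff.mpr
        have : (0:ℝ) ≤ t * r ^ (-α) := by positivity
        linarith
      have he0 : (0:ℝ) < Real.exp (-(t * r ^ (-α))) := Real.exp_pos _
      have h1 : (0:ℝ) ≤ 1 - Real.exp (-(t * r ^ (-α))) := by linarith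
      have h2 : r ^ (d-1) ≤ 1 := pow_le_one₀ hr0.le hr.2
      rw [Real.norm_eq_abs, abs_of_nonneg (by positivity)]
      nlinarith [pow_nonneg hr0.le (d-1)]
  have h1i : IntegrableOn (fun r : ℝ => r ^ (d - 1) * (1 - Real.exp (-(t * r ^ (-α))))) (Ioi 1) := by
    apply Integrable.mono' (g := fun r : ℝ => t * r ^ ((d:ℝ) - 1 - α))
    · exact (integrableOn_Ioi_rpow_of_lt (by linarith) one_pos).const_mul t
    · exact hmeas.mono_measure (Measure.restrict_mono (Ioi_subset_Ioi zero_le_one) le_rfl)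
    · filter_upwards [ae_restrict_mem measurableSet_Ioi] with r hr
      have hr0 : (0:ℝ) < r := lt_trans one_pos hr
      have he0 : (0:ℝ) < Real.exp (-(t * r ^ (-α))) := Real.exp_pos _
      have hle : 1 - Real.exp (-(t * r ^ (-α))) ≤ t * r ^ (-α) := by
        have := Real.add_one_le_exp (-(t * r ^ (-α)))
        linarith
      have h1 : (0:ℝ) ≤ 1 - Real.exp (-(t * r ^ (-α))) := by
        have h' : (0:ℝ) ≤ t * r ^ (-α) := by positivity
        have : Real.exp (-(t * r ^ (-α))) ≤ 1 := Real.exp_le_one_iff.mpr (by linarith)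
        linarith
      rw [Real.norm_eq_abs, abs_of_nonneg (by positivity)]
      calc r ^ (d-1) * (1 - Real.exp (-(t * r ^ (-α))))
          ≤ r ^ (d-1) * (t * r ^ (-α)) := by
            apply mul_le_mul_of_nonneg_left hle (pow_nonneg hr0.le _)
        _ = t * r ^ ((d:ℝ) - 1 - α) := by
            rw [← Real.rpow_natCast r (d-1), Nat.cast_sub hd, Nat.cast_one,
              show (d:ℝ) - 1 - α = ((d:ℝ) - 1) + (-α) by ring, Real.rpow_add hr0]
            ring
  have : Ioc (0:ℝ) 1 ∪ Ioi 1 = Ioi 0 := Ioc_union_Ioi_eq_Ioi zero_le_one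
  rw [← this]
  exact h01.union h1i

lemma auxB_s3 (d : ℕ) (hd : 1 ≤ d) {α t : ℝ} (hα : (d : ℝ) < α) (ht : 0 < t) :
    IntegrableOn (fun r : ℝ => r ^ d * r ^ (-α - 1) * Real.exp (-(t * r ^ (-α)))) (Ioi 0) := by
  have hmeas : AEStronglyMeasurable
      (fun r : ℝ => r ^ d * r ^ (-α - 1) * Real.exp (-(t * r ^ (-α)))) (volume.restrict (Ioi (0:ℝ))) := by
    apply Measurable.aestronglyMeasurable
    fun_prop
  have h01 : IntegrableOn (fun r : ℝ => r ^ d * r ^ (-α - 1) * Real.exp (-(t * r ^ (-α)))) (Ioc 0 1) := by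
    apply Integrable.mono' (g := fun _ : ℝ => t⁻¹)
    · exact integrableOn_const measure_Ioc_lt_top.ne
    · exact hmeas.mono_measure (Measure.restrict_mono Ioc_subset_Ioi_self le_rfl)
    · filter_upwards [ae_restrict_mem measurableSet_Ioc] with r hr
      have hr0 : (0:ℝ) < r := hr.1
      have hx : (0:ℝ) < t * r ^ (-α) := by
        have := Real.rpow_pos_of_pos hr0 (-α)
        positivity
      have hexp : Real.exp (-(t * r ^ (-α))) ≤ (t * r ^ (-α))⁻¹ := by
        rw [Real.exp_neg]
        apply inv_anti₀ hx
        have := Real.add_one_le_exp (t * r ^ (-α))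
        linarith
      rw [Real.norm_eq_abs, abs_of_nonneg (by positivity)]
      calc r ^ d * r ^ (-α - 1) * Real.exp (-(t * r ^ (-α)))
          ≤ r ^ d * r ^ (-α - 1) * (t * r ^ (-α))⁻¹ := by
            apply mul_le_mul_of_nonneg_left hexp (by positivity)
        _ = t⁻¹ * r ^ (d - 1) := by
            rw [mul_inv, ← Real.rpow_neg hr0.le, neg_neg,
              ← Real.rpow_natCast r d, ← Real.rpow_natCast r (d - 1), Nat.cast_sub hd,
              Nat.cast_one]
            rw [show (d:ℝ) - 1 = (d:ℝ) + (-α - 1) + α by ring, Real.rpow_add hr0,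
              Real.rpow_add hr0]
            ring
        _ ≤ t⁻¹ * 1 := by
            apply mul_le_mul_of_nonneg_left _ (by positivity)
            rw [← Real.rpow_natCast r (d - 1)]
            exact Real.rpow_le_one hr0.le hr.2 (by positivity)
        _ = t⁻¹ := mul_one _
  have h1i : IntegrableOn (fun r : ℝ => r ^ d * r ^ (-α - 1) * Real.exp (-(t * r ^ (-α)))) (Ioi 1) := by
    apply Integrable.mono' (g := fun r : ℝ => r ^ ((d:ℝ) - α - 1))
    · exact integrableOn_Ioi_rpow_of_lt (by linarith) one_pos
    · exact hmeas.mono_measure (Measure.restrict_mono (Ioi_subset_Ioi zero_le_one) le_rfl)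
    · filter_upwards [ae_restrict_mem measurableSet_Ioi] with r hr
      have hr0 : (0:ℝ) < r := lt_trans one_pos hr
      have hexp : Real.exp (-(t * r ^ (-α))) ≤ 1 := by
        apply Real.exp_le_one_iff.mpr
        have : (0:ℝ) ≤ t * r ^ (-α) := by positivity
        linarith
      rw [Real.norm_eq_abs, abs_of_nonneg (by positivity)]
      calc r ^ d * r ^ (-α - 1) * Real.exp (-(t * r ^ (-α)))
          ≤ r ^ d * r ^ (-α - 1) * 1 := by
            apply mul_le_mul_of_nonneg_left hexp (by positivity)
        _ = r ^ ((d:ℝ) - α - 1) := by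
            rw [mul_one, ← Real.rpow_natCast r d,
              show (d:ℝ) - α - 1 = (d:ℝ) + (-α - 1) by ring, Real.rpow_add hr0]
  have : Ioc (0:ℝ) 1 ∪ Ioi 1 = Ioi 0 := Ioc_union_Ioi_eq_Ioi zero_le_one
  rw [← this]
  exact h01.union h1i

lemma auxKey (d : ℕ) (hd : 1 ≤ d) {α t : ℝ} (hα : (d : ℝ) < α) (ht : 0 < t) :
    ∫ r in Ioi (0:ℝ), r ^ (d - 1) * (1 - Real.exp (-(t * r ^ (-α))))
      = Real.Gamma ((α - d) / α) * t ^ ((d:ℝ) / α) / d := by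
  have hd0 : (0:ℝ) < d := by exact_mod_cast hd
  have hα0 : (0:ℝ) < α := lt_trans hd0 hα
  set F : ℝ → ℝ := fun r => r ^ d * (1 - Real.exp (-(t * r ^ (-α)))) with hF
  set F' : ℝ → ℝ := fun r =>
    (d:ℝ) * (r ^ (d - 1) * (1 - Real.exp (-(t * r ^ (-α)))))
      - (t * α) * (r ^ d * r ^ (-α - 1) * Real.exp (-(t * r ^ (-α)))) with hF'
  have hderiv : ∀ r ∈ Ioi (0:ℝ), HasDerivAt F (F' r) r := by
    intro r hr
    have hr0 : r ≠ 0 := (ne_of_gt hr)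
    have h1 : HasDerivAt (fun x : ℝ => x ^ (-α)) (-α * r ^ (-α - 1)) r :=
      Real.hasDerivAt_rpow_const (Or.inl hr0)
    have h2 : HasDerivAt (fun x : ℝ => -(t * x ^ (-α))) (-(t * (-α * r ^ (-α - 1)))) r :=
      (h1.const_mul t).neg
    have h3 := h2.exp
    have h4 := h3.const_sub 1
    have h5 : HasDerivAt F ((d:ℝ) * r ^ (d - 1) * (1 - Real.exp (-(t * r ^ (-α)))) + r ^ d * -(Real.exp (-(t * r ^ (-α))) * -(t * (-α * r ^ (-α - 1))))) r := (hasDerivAt_pow d r).mul h4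
    convert h5 using 1
    simp only [hF']
    ring
  have hcont : ContinuousWithinAt F (Ici (0:ℝ)) 0 := by
    have hF0 : F 0 = 0 := by
      simp [hF, zero_pow (by omega : d ≠ 0)]
    unfold ContinuousWithinAt
    rw [hF0]
    apply squeeze_zero' (g := fun r : ℝ => r ^ d)
    · apply eventually_nhdsWithin_of_forall
      intro r hr
      have hr0 : (0:ℝ) ≤ r := hr
      have : Real.exp (-(t * r ^ (-α))) ≤ 1 := by
        apply Real.exp_le_one_iff.mpr
        have : (0:ℝ) ≤ t * r ^ (-α) := by positivity
        linarith
      simp only [hF]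
      nlinarith [pow_nonneg hr0 d]
    · apply eventually_nhdsWithin_of_forall
      intro r hr
      have hr0 : (0:ℝ) ≤ r := hr
      have he0 : (0:ℝ) < Real.exp (-(t * r ^ (-α))) := Real.exp_pos _
      simp only [hF]
      nlinarith [pow_nonneg hr0 d]
    · have : Tendsto (fun r : ℝ => r ^ d) (nhds 0) (nhds ((0:ℝ) ^ d)) :=
        (continuous_pow d).tendsto 0
      rw [zero_pow (by omega : d ≠ 0)] at this
      exact this.mono_left nhdsWithin_le_nhds
  have htend : Tendsto F atTop (nhds 0) := by
    apply squeeze_zero' (g := fun r : ℝ => t * r ^ ((d:ℝ) - α))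
    · filter_upwards [eventually_gt_atTop (0:ℝ)] with r hr0
      have : Real.exp (-(t * r ^ (-α))) ≤ 1 := by
        apply Real.exp_le_one_iff.mpr
        have : (0:ℝ) ≤ t * r ^ (-α) := by positivity
        linarith
      simp only [hF]
      nlinarith [pow_nonneg hr0.le d]
    · filter_upwards [eventually_gt_atTop (0:ℝ)] with r hr0
      have hle : 1 - Real.exp (-(t * r ^ (-α))) ≤ t * r ^ (-α) := by
        have := Real.add_one_le_exp (-(t * r ^ (-α)))
        linarith
      have h0 : (0:ℝ) ≤ r ^ d := pow_nonneg hr0.le d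
      calc F r ≤ r ^ d * (t * r ^ (-α)) := mul_le_mul_of_nonneg_left hle h0
        _ = t * r ^ ((d:ℝ) - α) := by
            rw [← Real.rpow_natCast r d, show (d:ℝ) - α = (d:ℝ) + (-α) by ring,
              Real.rpow_add hr0]
            ring
    · have : Tendsto (fun r : ℝ => r ^ (-(α - (d:ℝ)))) atTop (nhds 0) :=
        tendsto_rpow_neg_atTop (by linarith)
      have h2 := this.const_mul t
      rw [mul_zero] at h2
      convert h2 using 2 with r
      ring_nf
  have hintA := auxA_s3 d hd hα ht
  have hintB := auxB_s3 d hd hα ht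
  have hint : IntegrableOn F' (Ioi (0:ℝ)) := (hintA.const_mul _).sub (hintB.const_mul _)
  have key := integral_Ioi_of_hasDerivAt_of_tendsto hcont hderiv hint htend
  have hF0 : F 0 = 0 := by simp [hF, zero_pow (by omega : d ≠ 0)]
  rw [hF0, sub_zero] at key
  have hsplit : ∫ r in Ioi (0:ℝ), F' r
      = (d:ℝ) * (∫ r in Ioi (0:ℝ), r ^ (d - 1) * (1 - Real.exp (-(t * r ^ (-α)))))
        - (t * α) * ∫ r in Ioi (0:ℝ), r ^ d * r ^ (-α - 1) * Real.exp (-(t * r ^ (-α))) := by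
    rw [hF']
    rw [integral_sub (hintA.const_mul _) (hintB.const_mul _), integral_const_mul, integral_const_mul]
  -- compute ∫ B via substitution
  have hB : ∫ r in Ioi (0:ℝ), r ^ d * r ^ (-α - 1) * Real.exp (-(t * r ^ (-α)))
      = α⁻¹ * ((1 / t) ^ ((α - d) / α) * Real.Gamma ((α - d) / α)) := by
    have ha : (0:ℝ) < (α - d) / α := by
      apply div_pos (by linarith) hα0
    have hsub := integral_comp_rpow_Ioi
      (fun s : ℝ => s ^ ((α - d) / α - 1) * Real.exp (-(t * s))) (p := -α) (by linarith)
    rw [← integral_rpow_mul_exp_neg_mul_Ioi ha ht, ← hsub, ← integral_const_mul]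
    apply setIntegral_congr_fun measurableSet_Ioi
    intro r hr
    have hr0 : (0:ℝ) < r := hr
    simp only [smul_eq_mul]
    rw [abs_of_neg (by linarith : -α < 0), neg_neg]
    have hc : (r ^ (-α)) ^ ((α - (d:ℝ)) / α - 1) = r ^ ((d:ℕ):ℝ) := by
      rw [← Real.rpow_mul hr0.le]
      congr 1
      field_simp
      all_goals ring
    rw [hc, Real.rpow_natCast]
    field_simp
    all_goals ring
  have hdne : (d:ℝ) ≠ 0 := ne_of_gt hd0
  have hAval : (d:ℝ) * (∫ r in Ioi (0:ℝ), r ^ (d - 1) * (1 - Real.exp (-(t * r ^ (-α)))))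
      = t * α * (α⁻¹ * ((1 / t) ^ ((α - d) / α) * Real.Gamma ((α - d) / α))) := by
    rw [← hB]
    rw [hsplit] at key
    linarith
  have hQ : t * (1 / t) ^ ((α - (d:ℝ)) / α) = t ^ ((d:ℝ) / α) := by
    nth_rewrite 1 [← Real.rpow_one t]
    rw [one_div, Real.inv_rpow ht.le, ← Real.rpow_neg ht.le, ← Real.rpow_add ht]
    congr 1
    field_simp
    all_goals ring
  have h7 : t * α * (α⁻¹ * ((1 / t) ^ ((α - (d:ℝ)) / α) * Real.Gamma ((α - d) / α)))
      = Real.Gamma ((α - d) / α) * t ^ ((d:ℝ) / α) := by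
    rw [← hQ]
    field_simp
    all_goals ring
  rw [h7] at hAval
  field_simp
  linarith

end Aux

/-- Exact computation: `∫_{ℝ^d} (1 - e^{-t|y|^{-α}}) dy = ω_d Γ((α-d)/α) t^{d/α}`,
the integrand being understood with value `1` at `y = 0`. -/
theorem stmt3 (d : ℕ) (hd : 1 ≤ d) (α : ℝ) (hα : (d : ℝ) < α) (t : ℝ) (ht : 0 < t) :
    ∫ y : EuclideanSpace ℝ (Fin d),
        (if y = 0 then (1 : ℝ) else 1 - Real.exp (-(t * ‖y‖ ^ (-α))))
      = (volume (Metric.ball (0 : EuclideanSpace ℝ (Fin d)) 1)).toReal *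
          Real.Gamma ((α - d) / α) * t ^ ((d : ℝ) / α) := by
  have hfr : 0 < Module.finrank ℝ (EuclideanSpace ℝ (Fin d)) := by
    rw [finrank_euclideanSpace_fin]; omega
  haveI : Nontrivial (EuclideanSpace ℝ (Fin d)) := Module.nontrivial_of_finrank_pos hfr
  set f : ℝ → ℝ := fun r => if r = 0 then 1 else 1 - Real.exp (-(t * r ^ (-α))) with hf
  have h1 : ∫ y : EuclideanSpace ℝ (Fin d),
      (if y = 0 then (1 : ℝ) else 1 - Real.exp (-(t * ‖y‖ ^ (-α))))
      = ∫ y : EuclideanSpace ℝ (Fin d), f ‖y‖ := by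
    congr 1
    funext y
    simp only [hf, norm_eq_zero]
  rw [h1, MeasureTheory.integral_fun_norm_addHaar volume f]
  have h2 : ∫ y in Set.Ioi (0:ℝ),
      y ^ (Module.finrank ℝ (EuclideanSpace ℝ (Fin d)) - 1) • f y
      = ∫ y in Set.Ioi (0:ℝ), y ^ (d - 1) * (1 - Real.exp (-(t * y ^ (-α)))) := by
    apply setIntegral_congr_fun measurableSet_Ioi
    intro y hy
    have hy0 : (0:ℝ) < y := hy
    simp only [hf, smul_eq_mul, finrank_euclideanSpace_fin, if_neg (ne_of_gt hy0)]
  rw [h2, auxKey d hd hα ht, finrank_euclideanSpace_fin, nsmul_eq_mul, smul_eq_mul]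
  have hdne : (d:ℝ) ≠ 0 := by positivity
  field_simp
  rw [measureReal_def]
  ring
end

section
/- Let $d \ge 1$ be an integer, $\alpha > 0$ and let $k$ be a real number with $k\alpha > d$. Then $\lim_{\rho \to \infty} \rho^{\,k - \frac{d}{\alpha}} \int_{\mathbb{R}^d} \hat v(y)^k\, e^{-\rho\, \hat v(y)}\,\mathrm{d}y = \frac{\sigma_d}{\alpha}\,\Gamma\bigl(\tfrac{k\alpha-d}{\alpha}\bigr)$. -/
open MeasureTheory Real Filter Set
open scoped Classical

lemma aux_integral_eq (d : ℕ) (hd : 1 ≤ d) (α k : ℝ) (hα : 0 < α) (hk : (d : ℝ) < k * α)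
    (ρ : ℝ) (hρ : 0 < ρ) :
    (∫ y : EuclideanSpace ℝ (Fin d),
        (if y = 0 then (1:ℝ) else min (‖y‖ ^ (-α)) 1) ^ k *
        Real.exp (-(ρ * (if y = 0 then (1:ℝ) else min (‖y‖ ^ (-α)) 1)))) =
      (d * (volume (Metric.ball (0 : EuclideanSpace ℝ (Fin d)) 1)).toReal) *
        ((1/α) * (∫ x in Ioc (0:ℝ) 1, x ^ (k - d/α - 1) * Real.exp (-(ρ * x)))
          + (1/(d:ℝ)) * Real.exp (-ρ)) := by
  haveI : Nonempty (Fin d) := ⟨⟨0, hd⟩⟩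
  have hd0 : (0:ℝ) < d := by exact_mod_cast hd
  have hβ : 0 < k - (d:ℝ)/α := by
    have : (d:ℝ)/α < k := (div_lt_iff₀ hα).2 (by linarith)
    linarith
  set F : ℝ → ℝ := fun r => min (r ^ (-α)) 1 ^ k * Real.exp (-(ρ * min (r ^ (-α)) 1)) with hF
  -- Step A: replace by function of the norm
  have hA : (∫ y : EuclideanSpace ℝ (Fin d),
        (if y = 0 then (1:ℝ) else min (‖y‖ ^ (-α)) 1) ^ k *
        Real.exp (-(ρ * (if y = 0 then (1:ℝ) else min (‖y‖ ^ (-α)) 1))))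
      = ∫ y : EuclideanSpace ℝ (Fin d), F ‖y‖ := by
    apply integral_congr_ae
    have h0 : ∀ᵐ y : EuclideanSpace ℝ (Fin d) ∂volume, y ≠ 0 := by
      rw [ae_iff]
      simpa using measure_singleton (0 : EuclideanSpace ℝ (Fin d))
    filter_upwards [h0] with y hy
    simp [hF, hy]
  rw [hA, integral_fun_norm_addHaar volume F]
  simp only [finrank_euclideanSpace_fin, nsmul_eq_mul, smul_eq_mul]
  -- Step B: radial substitution r = x^(-1/α)
  set h : ℝ → ℝ := fun x => x ^ (-((d:ℝ)/α) - 1) * (min x 1 ^ k * Real.exp (-(ρ * min x 1)))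
    with hh
  have hp : (-α⁻¹ : ℝ) ≠ 0 := by
    simp [hα.ne']
  have hsub : (∫ r in Ioi (0:ℝ), r ^ (d - 1) * F r) = ∫ x in Ioi (0:ℝ), α⁻¹ * h x := by
    rw [← integral_comp_rpow_Ioi (fun r => r ^ (d - 1) * F r) hp]
    apply setIntegral_congr_fun measurableSet_Ioi
    intro x hx
    have hx0 : (0:ℝ) < x := hx
    have h1 : ((x ^ (-α⁻¹ : ℝ)) : ℝ) ^ (-α) = x := by
      rw [← Real.rpow_mul hx0.le]
      rw [show (-α⁻¹ * -α) = α⁻¹ * α by ring, inv_mul_cancel₀ hα.ne', Real.rpow_one]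
    have h2 : ((x ^ (-α⁻¹ : ℝ)) : ℝ) ^ (d - 1) = x ^ ((-α⁻¹) * ((d:ℝ) - 1)) := by
      rw [← Real.rpow_natCast (x ^ (-α⁻¹ : ℝ)) (d - 1), ← Real.rpow_mul hx0.le]
      congr 1
      rw [Nat.cast_sub hd, Nat.cast_one]
    have h3 : x ^ (-α⁻¹ - 1 : ℝ) * x ^ ((-α⁻¹) * ((d:ℝ) - 1)) = x ^ (-((d:ℝ)/α) - 1) := by
      rw [← Real.rpow_add hx0]
      congr 1
      field_simp
      ring
    simp only [smul_eq_mul, hF, hh, h1, h2]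
    rw [abs_neg, abs_of_pos (inv_pos.2 hα)]
    rw [← h3]
    ring
  rw [hsub, MeasureTheory.integral_const_mul]
  -- Step C: split the integral at 1
  have hEq1 : EqOn h (fun x => x ^ (k - (d:ℝ)/α - 1) * Real.exp (-(ρ * x))) (Ioc (0:ℝ) 1) := by
    intro x hx
    simp only [hh, min_eq_left hx.2]
    rw [show k - (d:ℝ)/α - 1 = (-((d:ℝ)/α) - 1) + k by ring, Real.rpow_add hx.1]
    ring
  have hEq2 : EqOn h (fun x => Real.exp (-ρ) * x ^ (-((d:ℝ)/α) - 1)) (Ioi (1:ℝ)) := by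
    intro x hx
    simp only [hh, min_eq_right (le_of_lt (mem_Ioi.1 hx)), Real.one_rpow, one_mul, mul_one]
    ring
  have hint1 : IntegrableOn (fun x => x ^ (k - (d:ℝ)/α - 1) * Real.exp (-(ρ * x)))
      (Ioc (0:ℝ) 1) := by
    have base : IntegrableOn (fun x : ℝ => x ^ (k - (d:ℝ)/α - 1)) (Ioc (0:ℝ) 1) := by
      have := intervalIntegral.intervalIntegrable_rpow' (a := (0:ℝ)) (b := 1)
        (show (-1:ℝ) < k - (d:ℝ)/α - 1 by linarith)
      rwa [intervalIntegrable_iff_integrableOn_Ioc_of_le zero_le_one] at this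
    refine Integrable.mono' base ?_ ?_
    · apply Measurable.aestronglyMeasurable
      have h1 : Measurable fun x : ℝ => x ^ (k - (d:ℝ)/α - 1) := by measurability
      exact h1.mul (Real.measurable_exp.comp (measurable_const.mul measurable_id).neg)
    · filter_upwards [ae_restrict_mem measurableSet_Ioc] with x hx
      have hxp : (0:ℝ) < x := hx.1
      rw [Real.norm_eq_abs, abs_mul, abs_of_pos (Real.rpow_pos_of_pos hxp _),
        abs_of_pos (Real.exp_pos _)]
      have : Real.exp (-(ρ * x)) ≤ 1 := Real.exp_le_one_iff.2 (by nlinarith)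
      nlinarith [Real.rpow_pos_of_pos hxp (k - (d:ℝ)/α - 1)]
  have hlt : -((d:ℝ)/α) - 1 < -1 := by
    have : 0 < (d:ℝ)/α := div_pos hd0 hα
    linarith
  have hint2 : IntegrableOn (fun x => Real.exp (-ρ) * x ^ (-((d:ℝ)/α) - 1)) (Ioi (1:ℝ)) :=
    (integrableOn_Ioi_rpow_of_lt hlt one_pos).const_mul _
  have hsplit : (∫ x in Ioi (0:ℝ), h x)
      = (∫ x in Ioc (0:ℝ) 1, h x) + ∫ x in Ioi (1:ℝ), h x := by
    rw [← Set.Ioc_union_Ioi_eq_Ioi (zero_le_one' ℝ)]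
    exact setIntegral_union Set.Ioc_disjoint_Ioi_same measurableSet_Ioi
      (hint1.congr_fun hEq1.symm measurableSet_Ioc)
      (hint2.congr_fun hEq2.symm measurableSet_Ioi)
  rw [hsplit, setIntegral_congr_fun measurableSet_Ioc hEq1,
    setIntegral_congr_fun measurableSet_Ioi hEq2, MeasureTheory.integral_const_mul,
    integral_Ioi_rpow_of_lt hlt one_pos]
  rw [show (-((d:ℝ)/α) - 1 + 1) = -((d:ℝ)/α) by ring, Real.one_rpow]
  rw [show -(1:ℝ) / -((d:ℝ)/α) = α / d by field_simp]
  have hαd : α⁻¹ * (Real.exp (-ρ) * (α / (d:ℝ))) = (1/(d:ℝ)) * Real.exp (-ρ) := by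
    field_simp
  rw [mul_add, hαd, one_div α]
  rw [measureReal_def]
  ring

/-- Surface area of the unit sphere in `ℝ^d`: `σ_d = d · ω_d`. -/
noncomputable def sigmad (d : ℕ) : ℝ :=
  d * (volume (Metric.ball (0 : EuclideanSpace ℝ (Fin d)) 1)).toReal

/-- `ρ^{k - d/α} ∫ v̂(y)^k e^{-ρ v̂(y)} dy → (σ_d/α) Γ((kα-d)/α)` as `ρ → ∞`. -/
theorem stmt6 (d : ℕ) (hd : 1 ≤ d) (α k : ℝ) (hα : 0 < α) (hk : (d : ℝ) < k * α) :
    Filter.Tendsto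
      (fun ρ : ℝ => ρ ^ (k - (d : ℝ) / α) *
        ∫ y : EuclideanSpace ℝ (Fin d), hatv d α y ^ k * Real.exp (-(ρ * hatv d α y)))
      atTop (nhds (sigmad d / α * Real.Gamma ((k * α - d) / α))) := by
  have hd0 : (0:ℝ) < d := by exact_mod_cast hd
  have hβ : 0 < k - (d:ℝ) / α := by
    have : (d:ℝ)/α < k := (div_lt_iff₀ hα).2 (by linarith)
    linarith
  have hkey : (k * α - d) / α = k - (d:ℝ)/α := by field_simp
  rw [hkey]
  have hG : Tendsto (fun ρ : ℝ => ∫ t in (0:ℝ)..ρ, Real.exp (-t) * t ^ (k - (d:ℝ)/α - 1)) atTop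
      (nhds (Real.Gamma (k - (d:ℝ)/α))) := by
    rw [Real.Gamma_eq_integral hβ]
    exact intervalIntegral_tendsto_integral_Ioi 0 (Real.GammaIntegral_convergent hβ) tendsto_id
  have hE : Tendsto (fun ρ : ℝ => ρ ^ (k - (d:ℝ)/α) * Real.exp (-ρ)) atTop (nhds 0) := by
    have := tendsto_rpow_mul_exp_neg_mul_atTop_nhds_zero (k - (d:ℝ)/α) 1 one_pos
    simpa using this
  have hmain : Tendsto
      (fun ρ : ℝ => sigmad d / α * (∫ t in (0:ℝ)..ρ, Real.exp (-t) * t ^ (k - (d:ℝ)/α - 1))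
        + sigmad d / d * (ρ ^ (k - (d:ℝ)/α) * Real.exp (-ρ))) atTop
      (nhds (sigmad d / α * Real.Gamma (k - (d:ℝ)/α))) := by
    have := (hG.const_mul (sigmad d / α)).add (hE.const_mul (sigmad d / d))
    simpa using this
  refine hmain.congr' ?_
  filter_upwards [eventually_gt_atTop 0] with ρ hρ
  have key := aux_integral_eq d hd α k hα hk ρ hρ
  have hIoc : ρ ^ (k - (d:ℝ)/α) * ∫ x in Ioc (0:ℝ) 1, x ^ (k - (d:ℝ)/α - 1) * Real.exp (-(ρ * x))
      = ∫ t in (0:ℝ)..ρ, Real.exp (-t) * t ^ (k - (d:ℝ)/α - 1) := by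
    set b : ℝ := k - (d:ℝ)/α with hb
    have hone : ρ ^ (-(b-1)) * ρ ^ (b-1) = 1 := by
      rw [← Real.rpow_add hρ]; norm_num
    have h1 : (∫ x in Ioc (0:ℝ) 1, x ^ (b - 1) * Real.exp (-(ρ * x)))
        = ∫ x in Ioc (0:ℝ) 1, ρ ^ (-(b-1)) * (Real.exp (-(x * ρ)) * (x * ρ) ^ (b - 1)) := by
      apply setIntegral_congr_fun measurableSet_Ioc
      intro x hx
      simp only
      rw [Real.mul_rpow hx.1.le hρ.le, mul_comm x ρ]
      linear_combination (-(Real.exp (-(ρ*x)) * x ^ (b-1))) * hone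
    have h2 : (∫ x in (0:ℝ)..1, Real.exp (-(x * ρ)) * (x * ρ) ^ (b - 1))
        = ρ⁻¹ • ∫ t in (0:ℝ)..ρ, Real.exp (-t) * t ^ (b - 1) := by
      have := intervalIntegral.integral_comp_mul_right (a := (0:ℝ)) (b := (1:ℝ))
        (fun t => Real.exp (-t) * t ^ (b - 1)) hρ.ne'
      simpa using this
    rw [h1, MeasureTheory.integral_const_mul, ← intervalIntegral.integral_of_le zero_le_one, h2]
    rw [smul_eq_mul, ← mul_assoc, ← mul_assoc]
    rw [show ρ ^ b * ρ ^ (-(b-1)) * ρ⁻¹ = 1 by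
      rw [← Real.rpow_neg_one ρ, ← Real.rpow_add hρ, ← Real.rpow_add hρ]
      norm_num]
    rw [one_mul]
  show sigmad d / α * _ + sigmad d / d * _ = ρ ^ (k - (d:ℝ)/α) * _
  rw [show (fun y : EuclideanSpace ℝ (Fin d) => hatv d α y ^ k * Real.exp (-(ρ * hatv d α y)))
      = fun y => (if y = 0 then (1:ℝ) else min (‖y‖ ^ (-α)) 1) ^ k *
        Real.exp (-(ρ * (if y = 0 then (1:ℝ) else min (‖y‖ ^ (-α)) 1))) from rfl]
  rw [key, ← hIoc]
  unfold sigmad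
  have hαne : α ≠ 0 := hα.ne'
  have hdne : (d:ℝ) ≠ 0 := hd0.ne'
  have alg : ∀ A I E P : ℝ,
      (d:ℝ)*A/α * (P*I) + (d:ℝ)*A/(d:ℝ) * (P*E) = P * ((d:ℝ)*A*((1/α)*I + (1/(d:ℝ))*E)) := by
    intro A I E P
    field_simp
  exact alg _ _ _ _
end

section
/- Let $d \ge 1$ be an integer and $\alpha > d$. Then for every real $\theta$, $\lim_{\rho \to \infty} \int_{\mathbb{R}^d} \Bigl( e^{\sqrt{-1}\,\theta\, \rho^{\frac{2\alpha-d}{2\alpha}} \hat v(y)} - 1 - \sqrt{-1}\,\theta\, \rho^{\frac{2\alpha-d}{2\alpha}} \hat v(y) \Bigr)\, e^{-\rho\,\hat v(y)}\,\mathrm{d}y \;=\; -\frac{\theta^2}{2}\cdot\frac{\sigma_d}{\alpha}\,\Gamma\bigl(\tfrac{2\alpha-d}{\alpha}\bigr)$, where the integral is a complex-valued Lebesgue integral. -/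
open MeasureTheory Real Filter
open scoped Classical

open Set

lemma one_sub_cos_le (x : ℝ) : 1 - Real.cos x ≤ x ^ 2 / 2 := by
  have h1 : Real.cos x = 1 - 2 * Real.sin (x / 2) ^ 2 := by
    have h := Real.cos_two_mul' (x / 2)
    rw [mul_div_cancel₀ _ (two_ne_zero)] at h
    have h2 := Real.sin_sq_add_cos_sq (x / 2)
    nlinarith
  have h3 : Real.sin (x / 2) ^ 2 ≤ (x / 2) ^ 2 := Real.sin_sq_le_sq
  nlinarith

lemma quad_aux' (x : ℝ) (hx : 0 ≤ x) :
    2 - 2 * Real.cos x - 2 * (x * Real.sin x) + x ^ 2 ≤ x ^ 4 / 4 := by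
  set f : ℝ → ℝ := fun x => x ^ 4 / 4 - (2 - 2 * Real.cos x - 2 * (x * Real.sin x) + x ^ 2) with hf
  have hderiv : ∀ y : ℝ, HasDerivAt f (y ^ 3 - 2 * y * (1 - Real.cos y)) y := by
    intro y
    have h1 : HasDerivAt (fun x : ℝ => x ^ 4 / 4) (y ^ 3) y := by
      simpa using ((hasDerivAt_pow 4 y).div_const 4)
    have h2 : HasDerivAt Real.cos (-Real.sin y) y := Real.hasDerivAt_cos y
    have h3 : HasDerivAt (fun x : ℝ => x * Real.sin x)
        (Real.sin y + y * Real.cos y) y := by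
      simpa using (hasDerivAt_id' y).fun_mul (Real.hasDerivAt_sin y)
    have h4 : HasDerivAt (fun x : ℝ => x ^ 2) (2 * y) y := by simpa using hasDerivAt_pow 2 y
    have := h1.sub (((h2.const_mul 2).neg.add_const 2).sub (h3.const_mul 2) |>.add h4)
    convert this using 1
    · rfl
    · rfl
    · ext x; simp [hf]; ring
    · ring
  have hdiff : Differentiable ℝ f := fun y => (hderiv y).differentiableAt
  have hmono : MonotoneOn f (Set.Ici 0) := by
    apply monotoneOn_of_deriv_nonneg (convex_Ici 0) hdiff.continuous.continuousOn
      (fun y _ => (hdiff y).differentiableWithinAt)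
    intro y hy
    rw [interior_Ici] at hy
    rw [(hderiv y).deriv]
    have h5 := one_sub_cos_le y
    have hy0 : (0:ℝ) < y := hy
    nlinarith
  have h0 : f 0 ≤ f x := hmono (by simp) hx (by exact hx)
  simp [hf] at h0
  nlinarith [h0]

lemma quad_aux (x : ℝ) :
    2 - 2 * Real.cos x - 2 * (x * Real.sin x) + x ^ 2 ≤ x ^ 4 / 4 := by
  rcases le_or_gt 0 x with hx | hx
  · exact quad_aux' x hx
  · have h := quad_aux' (-x) (by linarith)
    have : (-x) ^ 4 = x ^ 4 := by ring
    rw [this] at h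
    simpa [Real.cos_neg, Real.sin_neg] using h

lemma norm_exp_I_sub_le (x : ℝ) :
    ‖Complex.exp (Complex.I * x) - 1 - Complex.I * x‖ ≤ x ^ 2 / 2 := by
  have key : ∀ y : ℝ, ‖Complex.exp (Complex.I * y) - 1 - Complex.I * y‖ ≤ y ^ 2 / 2 := by
    intro y
    have he : Complex.exp (Complex.I * y) = Real.cos y + Real.sin y * Complex.I := by
      rw [mul_comm, Complex.exp_mul_I]
      simp [Complex.ofReal_cos, Complex.ofReal_sin]
    have hre : (Complex.exp (Complex.I * y) - 1 - Complex.I * y).re = Real.cos y - 1 := by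
      simp [he, Complex.ofReal_cos, Complex.ofReal_sin, Complex.cos_ofReal_re]
    have him : (Complex.exp (Complex.I * y) - 1 - Complex.I * y).im = Real.sin y - y := by
      simp [he, Complex.ofReal_cos, Complex.ofReal_sin, Complex.sin_ofReal_re]
    rw [Complex.norm_def, Complex.normSq_apply, hre, him]
    have hq := quad_aux y
    have : (Real.cos y - 1) * (Real.cos y - 1) + (Real.sin y - y) * (Real.sin y - y)
        ≤ (y ^ 2 / 2) ^ 2 := by
      have h2 := Real.sin_sq_add_cos_sq y
      nlinarith
    calc Real.sqrt ((Real.cos y - 1) * (Real.cos y - 1) + (Real.sin y - y) * (Real.sin y - y))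
        ≤ Real.sqrt ((y ^ 2 / 2) ^ 2) := Real.sqrt_le_sqrt this
      _ = y ^ 2 / 2 := Real.sqrt_sq (by positivity)
  exact key x

lemma norm_exp_I_sub_add_le {x : ℝ} (hx : |x| ≤ 1) :
    ‖Complex.exp (Complex.I * x) - 1 - Complex.I * x + (x:ℂ) ^ 2 / 2‖ ≤ 2 / 9 * |x| ^ 3 := by
  have habs : ‖Complex.I * x‖ = |x| := by
    simp [map_mul, Complex.norm_real]
  have h := Complex.exp_bound (x := Complex.I * x) (by rw [habs]; exact hx) (n := 3) (by norm_num)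
  have hsum : ∑ m ∈ Finset.range 3, (Complex.I * x) ^ m / m.factorial
      = 1 + Complex.I * x - (x:ℂ) ^ 2 / 2 := by
    rw [Finset.sum_range_succ, Finset.sum_range_succ, Finset.sum_range_one]
    simp [Complex.I_sq, pow_two]
    ring_nf
    rw [Complex.I_sq]
    ring
  rw [hsum, habs] at h
  have : Complex.exp (Complex.I * x) - (1 + Complex.I * x - (x:ℂ) ^ 2 / 2)
      = Complex.exp (Complex.I * x) - 1 - Complex.I * x + (x:ℂ) ^ 2 / 2 := by ring
  rw [this] at h
  calc ‖Complex.exp (Complex.I * x) - 1 - Complex.I * x + (x:ℂ) ^ 2 / 2‖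
      ≤ |x| ^ 3 * ((3 + 1 : ℝ) * ((3).factorial * 3 : ℝ)⁻¹) := by exact_mod_cast h
    _ = 2 / 9 * |x| ^ 3 := by norm_num [Nat.factorial]; ring

noncomputable def Ffun (θ α : ℝ) (d : ℕ) (ρ v : ℝ) : ℂ :=
  (Complex.exp (Complex.I * (θ : ℂ) * ((ρ ^ ((2 * α - d) / (2 * α)) * v : ℝ) : ℂ)) - 1 -
    Complex.I * (θ : ℂ) * ((ρ ^ ((2 * α - d) / (2 * α)) * v : ℝ) : ℂ)) *
    Complex.exp (-((ρ * v : ℝ) : ℂ))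

noncomputable def Gfun (θ α : ℝ) (d : ℕ) (ρ : ℝ) : ℝ → ℂ :=
  (Set.Ioc (0:ℝ) ρ).indicator fun u =>
    (ρ ^ ((d:ℝ)/α) * u ^ (-((d:ℝ)/α) - 1)) •
      ((Complex.exp (Complex.I * (θ : ℂ) * ((ρ ^ (-((d:ℝ)/(2*α))) * u : ℝ) : ℂ)) - 1 -
        Complex.I * (θ : ℂ) * ((ρ ^ (-((d:ℝ)/(2*α))) * u : ℝ) : ℂ)) * Complex.exp (-(u:ℂ)))

lemma norm_Ffun_le (θ α : ℝ) (d : ℕ) (ρ v : ℝ) :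
    ‖Ffun θ α d ρ v‖ ≤ (θ * (ρ ^ ((2 * α - d) / (2 * α)) * v)) ^ 2 / 2 * Real.exp (-(ρ * v)) := by
  rw [Ffun, norm_mul]
  have h2 : ‖Complex.exp (-((ρ * v : ℝ) : ℂ))‖ = Real.exp (-(ρ * v)) := by
    rw [Complex.norm_exp]
    norm_num
  rw [h2]
  apply mul_le_mul_of_nonneg_right _ (Real.exp_nonneg _)
  have : Complex.I * (θ : ℂ) * ((ρ ^ ((2 * α - d) / (2 * α)) * v : ℝ) : ℂ)
      = Complex.I * ((θ * (ρ ^ ((2 * α - d) / (2 * α)) * v) : ℝ) : ℂ) := by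
    push_cast; ring
  rw [this]
  exact norm_exp_I_sub_le _

lemma tendstoErr (d : ℕ) (hd : 1 ≤ d) (α : ℝ) (hα : (d : ℝ) < α) (θ : ℝ) :
    Tendsto (fun ρ : ℝ => Ffun θ α d ρ 1) atTop (nhds 0) := by
  have hα0 : (0:ℝ) < α := lt_of_le_of_lt (by exact_mod_cast Nat.zero_le d) hα
  have hd0 : (0:ℝ) < d := by exact_mod_cast hd
  apply squeeze_zero_norm'
    (a := fun ρ : ℝ => θ ^ 2 / 2 * (ρ ^ 2 * Real.exp (-ρ)))
  · filter_upwards [eventually_ge_atTop (1:ℝ)] with ρ hρ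
    have hρ0 : (0:ℝ) ≤ ρ := le_trans zero_le_one hρ
    have hb : ρ ^ ((2 * α - d) / (2 * α)) ≤ ρ := by
      nth_rewrite 2 [show ρ = ρ ^ (1:ℝ) by rw [Real.rpow_one]]
      apply Real.rpow_le_rpow_of_exponent_le hρ
      rw [div_le_one (by linarith)]
      linarith
    have hb0 : 0 ≤ ρ ^ ((2 * α - d) / (2 * α)) := Real.rpow_nonneg hρ0 _
    calc ‖Ffun θ α d ρ 1‖ ≤ (θ * (ρ ^ ((2 * α - d) / (2 * α)) * 1)) ^ 2 / 2
          * Real.exp (-(ρ * 1)) := norm_Ffun_le θ α d ρ 1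
      _ ≤ θ ^ 2 / 2 * (ρ ^ 2 * Real.exp (-ρ)) := by
        rw [mul_one, mul_one]
        rw [mul_pow]
        have : (ρ ^ ((2 * α - d) / (2 * α))) ^ 2 ≤ ρ ^ 2 := by
          apply pow_le_pow_left₀ hb0 hb
        nlinarith [Real.exp_nonneg (-ρ), sq_nonneg θ, mul_le_mul_of_nonneg_left this
          (by positivity : (0:ℝ) ≤ θ ^ 2 / 2)]
  · have := (tendsto_pow_mul_exp_neg_atTop_nhds_zero 2).const_mul (θ ^ 2 / 2)
    simpa using this

lemma tendstoG (d : ℕ) (hd : 1 ≤ d) (α : ℝ) (hα : (d : ℝ) < α) (θ : ℝ) :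
    Tendsto (fun ρ : ℝ => ∫ u in Ioi (0:ℝ), Gfun θ α d ρ u) atTop
      (nhds ((-(θ ^ 2 / 2) * Real.Gamma (2 - (d:ℝ)/α) : ℝ) : ℂ)) := by
  have hα0 : (0:ℝ) < α := lt_of_le_of_lt (by exact_mod_cast Nat.zero_le d) hα
  have hd0 : (0:ℝ) < d := by exact_mod_cast hd
  have hγ0 : (0:ℝ) < (d:ℝ)/α := by positivity
  have hγ1 : (d:ℝ)/α < 1 := (div_lt_one hα0).mpr hα
  set γ : ℝ := (d:ℝ)/α with hγdef
  have key : Tendsto (fun ρ : ℝ => ∫ u in Ioi (0:ℝ), Gfun θ α d ρ u) atTop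
      (nhds (∫ u in Ioi (0:ℝ),
        ((-(θ ^ 2 / 2) * (Real.exp (-u) * u ^ (1 - γ)) : ℝ) : ℂ))) := by
    apply tendsto_integral_filter_of_dominated_convergence
      (bound := fun u => θ ^ 2 / 2 * (Real.exp (-u) * u ^ (1 - γ)))
    · -- measurability
      filter_upwards with ρ
      apply AEStronglyMeasurable.indicator _ measurableSet_Ioc
      apply ContinuousOn.aestronglyMeasurable _ measurableSet_Ioi
      apply ContinuousOn.fun_smul
      · exact continuousOn_const.mul (fun x hx =>
          (Real.continuousAt_rpow_const x _ (Or.inl (ne_of_gt hx))).continuousWithinAt)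
      · apply Continuous.continuousOn
        fun_prop
    · -- bound
      filter_upwards [eventually_ge_atTop (1:ℝ)] with ρ hρ
      rw [ae_restrict_iff' measurableSet_Ioi]
      filter_upwards with u hu
      have hu0 : (0:ℝ) < u := hu
      have hρ0 : (0:ℝ) < ρ := lt_of_lt_of_le zero_lt_one hρ
      rw [Gfun]
      by_cases h : u ∈ Set.Ioc (0:ℝ) ρ
      · rw [Set.indicator_of_mem h]
        simp only [← hγdef]
        have hE : Complex.I * (θ : ℂ) * ((ρ ^ (-γ/2) * u : ℝ) : ℂ)
            = Complex.I * ((θ * (ρ ^ (-γ/2) * u) : ℝ) : ℂ) := by push_cast; ring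
        have hexp2 : -((d:ℝ)/(2*α)) = -γ/2 := by rw [hγdef]; ring
        rw [hexp2, hE, norm_smul, Real.norm_eq_abs, norm_mul]
        have h1 : ‖Complex.exp (Complex.I * ((θ * (ρ ^ (-γ/2) * u) : ℝ) : ℂ)) - 1 -
            Complex.I * ((θ * (ρ ^ (-γ/2) * u) : ℝ) : ℂ)‖
            ≤ (θ * (ρ ^ (-γ/2) * u)) ^ 2 / 2 := norm_exp_I_sub_le _
        have h2 : ‖Complex.exp (-(u:ℂ))‖ = Real.exp (-u) := by
          rw [Complex.norm_exp]; norm_num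
        have h3 : |ρ ^ γ * u ^ (-γ - 1)| = ρ ^ γ * u ^ (-γ - 1) := by
          apply abs_of_nonneg; positivity
        rw [h2, h3]
        have hkey : ρ ^ γ * u ^ (-γ - 1) * ((θ * (ρ ^ (-γ/2) * u)) ^ 2 / 2)
            = θ ^ 2 / 2 * u ^ (1 - γ) := by
          have e1 : (ρ ^ (-γ/2)) ^ 2 = ρ ^ (-γ) := by
            rw [← Real.rpow_natCast (ρ ^ (-γ/2)) 2, ← Real.rpow_mul hρ0.le]
            norm_num
          have e2 : ρ ^ γ * ρ ^ (-γ) = 1 := by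
            rw [← Real.rpow_add hρ0]; simp
          have e3 : u ^ (-γ - 1) * u ^ (2:ℕ) = u ^ (1 - γ) := by
            rw [← Real.rpow_natCast u 2, ← Real.rpow_add hu0]; ring_nf
          have expand : (θ * (ρ ^ (-γ/2) * u)) ^ 2 = θ ^ 2 * ρ ^ (-γ) * u ^ (2:ℕ) := by
            rw [mul_pow, mul_pow, e1]; ring
          rw [expand]
          calc ρ ^ γ * u ^ (-γ - 1) * (θ ^ 2 * ρ ^ (-γ) * u ^ (2:ℕ) / 2)
              = (ρ ^ γ * ρ ^ (-γ)) * (θ ^ 2 / 2 * (u ^ (-γ - 1) * u ^ (2:ℕ))) := by ring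
            _ = θ ^ 2 / 2 * u ^ (1 - γ) := by rw [e2, e3]; ring
        calc ρ ^ γ * u ^ (-γ - 1) *
              (‖Complex.exp (Complex.I * ((θ * (ρ ^ (-γ/2) * u) : ℝ) : ℂ)) - 1 -
                Complex.I * ((θ * (ρ ^ (-γ/2) * u) : ℝ) : ℂ)‖ * Real.exp (-u))
            ≤ ρ ^ γ * u ^ (-γ - 1) * ((θ * (ρ ^ (-γ/2) * u)) ^ 2 / 2 * Real.exp (-u)) := by
              apply mul_le_mul_of_nonneg_left _ (by positivity)
              exact mul_le_mul_of_nonneg_right h1 (Real.exp_nonneg _)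
          _ = θ ^ 2 / 2 * (Real.exp (-u) * u ^ (1 - γ)) := by
              rw [← mul_assoc, hkey]; ring
      · rw [Set.indicator_of_notMem h, norm_zero]
        positivity
    · -- integrable bound
      have h := Real.GammaIntegral_convergent (s := 2 - γ) (by linarith)
      have h2 : (fun u : ℝ => θ ^ 2 / 2 * (Real.exp (-u) * u ^ (1 - γ)))
          = fun u : ℝ => θ ^ 2 / 2 * (Real.exp (-u) * u ^ ((2 - γ) - 1)) := by
        funext u; ring_nf
      rw [h2]
      exact h.const_mul _
    · -- pointwise limit
      rw [ae_restrict_iff' measurableSet_Ioi]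
      filter_upwards with u hu
      have hu0 : (0:ℝ) < u := hu
      rw [← tendsto_sub_nhds_zero_iff]
      have hcρ : Tendsto (fun ρ : ℝ => |θ| * ρ ^ (-γ/2) * u) atTop (nhds 0) := by
        have h0 : Tendsto (fun ρ : ℝ => ρ ^ (-γ/2)) atTop (nhds 0) := by
          have := tendsto_rpow_neg_atTop (y := γ/2) (by positivity)
          simpa [neg_div] using this
        have := (h0.const_mul |θ|).mul_const u
        simpa using this
      apply squeeze_zero_norm' (a := fun ρ : ℝ =>
        2 / 9 * |θ| ^ 3 * (u ^ (-γ - 1) * u ^ 3) * Real.exp (-u) * ρ ^ (-γ/2))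
      · filter_upwards [eventually_ge_atTop (max 1 u), hcρ.eventually_le_const one_pos]
          with ρ hρ hxle
        have hρ1 : (1:ℝ) ≤ ρ := le_trans (le_max_left _ _) hρ
        have hρu : u ≤ ρ := le_trans (le_max_right _ _) hρ
        have hρ0 : (0:ℝ) < ρ := lt_of_lt_of_le zero_lt_one hρ1
        have hc0 : (0:ℝ) ≤ ρ ^ (-γ/2) := Real.rpow_nonneg hρ0.le _
        set x : ℝ := θ * (ρ ^ (-γ/2) * u) with hxdef
        have hxabs : |x| = |θ| * ρ ^ (-γ/2) * u := by
          rw [hxdef, abs_mul, abs_mul, abs_of_nonneg hc0, abs_of_nonneg hu0.le]; ring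
        have hx1 : |x| ≤ 1 := by rw [hxabs]; exact hxle
        have hexp2 : -((d:ℝ)/(2*α)) = -γ/2 := by rw [hγdef]; ring
        have hmem : u ∈ Set.Ioc (0:ℝ) ρ := ⟨hu0, hρu⟩
        rw [Gfun, Set.indicator_of_mem hmem, hexp2]
        have hE : Complex.I * (θ : ℂ) * ((ρ ^ (-γ/2) * u : ℝ) : ℂ)
            = Complex.I * ((x : ℝ) : ℂ) := by rw [hxdef]; push_cast; ring
        rw [hE]
        -- rewrite the limit value as a smul
        have e1 : (ρ ^ (-γ/2)) ^ 2 = ρ ^ (-γ) := by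
          rw [← Real.rpow_natCast (ρ ^ (-γ/2)) 2, ← Real.rpow_mul hρ0.le]; norm_num
        have e2 : ρ ^ γ * ρ ^ (-γ) = 1 := by rw [← Real.rpow_add hρ0]; simp
        have e3 : u ^ (-γ - 1) * u ^ (2:ℕ) = u ^ (1 - γ) := by
          rw [← Real.rpow_natCast u 2, ← Real.rpow_add hu0]; ring_nf
        have e1 : (ρ ^ (-γ/2)) ^ 2 = ρ ^ (-γ) := by
          rw [← Real.rpow_natCast (ρ ^ (-γ/2)) 2, ← Real.rpow_mul hρ0.le]; norm_num
        have e2 : ρ ^ γ * ρ ^ (-γ) = 1 := by rw [← Real.rpow_add hρ0]; simp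
        have e3 : u ^ (-γ - 1) * u ^ (2:ℕ) = u ^ (1 - γ) := by
          rw [← Real.rpow_natCast u 2, ← Real.rpow_add hu0]; ring_nf
        have e5 : ρ ^ γ * (ρ ^ (-γ/2)) ^ 3 = ρ ^ (-γ/2) := by
          rw [← Real.rpow_natCast (ρ ^ (-γ/2)) 3, ← Real.rpow_mul hρ0.le, ← Real.rpow_add hρ0]
          congr 1; push_cast; ring
        have hreal : -(θ ^ 2 / 2) * (Real.exp (-u) * u ^ (1 - γ))
            = ρ ^ γ * u ^ (-γ - 1) * (-(x ^ 2) / 2 * Real.exp (-u)) := by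
          have expand : x ^ 2 = θ ^ 2 * ρ ^ (-γ) * u ^ (2:ℕ) := by
            rw [hxdef, mul_pow, mul_pow, e1]; ring
          rw [expand]
          calc -(θ ^ 2 / 2) * (Real.exp (-u) * u ^ (1 - γ))
              = -(θ ^ 2 / 2) * (Real.exp (-u) * (u ^ (-γ - 1) * u ^ (2:ℕ))) := by rw [e3]
            _ = (ρ ^ γ * ρ ^ (-γ)) * (-(θ ^ 2 / 2)
                * (Real.exp (-u) * (u ^ (-γ - 1) * u ^ (2:ℕ)))) := by rw [e2]; ring
            _ = _ := by ring
        have hlim_eq : ((-(θ ^ 2 / 2) * (Real.exp (-u) * u ^ (1 - γ)) : ℝ) : ℂ)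
            = (ρ ^ γ * u ^ (-γ - 1)) • ((-(x:ℂ) ^ 2 / 2) * Complex.exp (-(u:ℂ))) := by
          have hexpc : Complex.exp (-(u:ℂ)) = ((Real.exp (-u) : ℝ) : ℂ) := by
            rw [← Complex.ofReal_neg, Complex.ofReal_exp]
          rw [hexpc, Complex.real_smul, hreal]
          push_cast
          ring
        simp only [← hγdef]
        rw [hlim_eq, ← smul_sub]
        have hfactor : (Complex.exp (Complex.I * ((x:ℝ):ℂ)) - 1 - Complex.I * ((x:ℝ):ℂ)) *
              Complex.exp (-(u:ℂ)) - (-(x:ℂ) ^ 2 / 2) * Complex.exp (-(u:ℂ))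
            = (Complex.exp (Complex.I * ((x:ℝ):ℂ)) - 1 - Complex.I * ((x:ℝ):ℂ)
              + (x:ℂ) ^ 2 / 2) * Complex.exp (-(u:ℂ)) := by ring
        rw [hfactor, norm_smul, Real.norm_eq_abs, norm_mul]
        have h2 : ‖Complex.exp (-(u:ℂ))‖ = Real.exp (-u) := by
          rw [Complex.norm_exp]; norm_num
        have h3 : |ρ ^ γ * u ^ (-γ - 1)| = ρ ^ γ * u ^ (-γ - 1) := by
          apply abs_of_nonneg; positivity
        rw [h2, h3]
        have hcub := norm_exp_I_sub_add_le hx1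
        calc ρ ^ γ * u ^ (-γ - 1) * (‖Complex.exp (Complex.I * ((x:ℝ):ℂ)) - 1
              - Complex.I * ((x:ℝ):ℂ) + (x:ℂ) ^ 2 / 2‖ * Real.exp (-u))
            ≤ ρ ^ γ * u ^ (-γ - 1) * ((2 / 9 * |x| ^ 3) * Real.exp (-u)) := by
              apply mul_le_mul_of_nonneg_left _ (by positivity)
              exact mul_le_mul_of_nonneg_right hcub (Real.exp_nonneg _)
          _ = 2 / 9 * |θ| ^ 3 * (u ^ (-γ - 1) * u ^ 3) * Real.exp (-u) * ρ ^ (-γ/2) := by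
              rw [hxabs]
              calc ρ ^ γ * u ^ (-γ - 1) * ((2 / 9 * (|θ| * ρ ^ (-γ/2) * u) ^ 3) * Real.exp (-u))
                  = (ρ ^ γ * (ρ ^ (-γ/2)) ^ 3) * (2 / 9 * |θ| ^ 3 * (u ^ (-γ - 1) * u ^ 3)
                    * Real.exp (-u)) := by ring
                _ = _ := by rw [e5]; ring
      · have := (tendsto_rpow_neg_atTop (y := γ/2) (by positivity)).const_mul
          (2 / 9 * |θ| ^ 3 * (u ^ (-γ - 1) * u ^ 3) * Real.exp (-u))
        simpa [neg_div] using this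
  -- compute the limit integral
  have hval : (∫ u in Ioi (0:ℝ), ((-(θ ^ 2 / 2) * (Real.exp (-u) * u ^ (1 - γ)) : ℝ) : ℂ))
      = ((-(θ ^ 2 / 2) * Real.Gamma (2 - γ) : ℝ) : ℂ) := by
    rw [show (∫ u in Ioi (0:ℝ), ((-(θ ^ 2 / 2) * (Real.exp (-u) * u ^ (1 - γ)) : ℝ) : ℂ))
        = ((∫ u in Ioi (0:ℝ), -(θ ^ 2 / 2) * (Real.exp (-u) * u ^ (1 - γ)) : ℝ) : ℂ)
      from integral_ofReal]
    norm_cast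
    rw [MeasureTheory.integral_const_mul]
    congr 1
    rw [Real.Gamma_eq_integral (by linarith)]
    congr 1
    funext u
    congr 2
    ring
  rw [hval] at key
  exact key

lemma eventEq (d : ℕ) (hd : 1 ≤ d) (α : ℝ) (hα : (d : ℝ) < α) (θ : ℝ) {ρ : ℝ} (hρ : 1 ≤ ρ) :
    ∫ y : EuclideanSpace ℝ (Fin d), Ffun θ α d ρ (hatv d α y)
      = sigmad d • (α⁻¹ • ((∫ u in Ioi (0:ℝ), Gfun θ α d ρ u) + (α/(d:ℝ)) • Ffun θ α d ρ 1)) := by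
  have hα0 : (0:ℝ) < α := lt_of_le_of_lt (by exact_mod_cast Nat.zero_le d) hα
  have hd0 : (0:ℝ) < d := by exact_mod_cast hd
  have hρ0 : (0:ℝ) < ρ := lt_of_lt_of_le one_pos hρ
  have hγ0 : (0:ℝ) < (d:ℝ)/α := by positivity
  have hγ1 : (d:ℝ)/α < 1 := (div_lt_one hα0).mpr hα
  haveI : Nontrivial (EuclideanSpace ℝ (Fin d)) := by
    apply Module.nontrivial_of_finrank_pos (R := ℝ)
    rw [finrank_euclideanSpace_fin]
    omega
  set e : ℝ := -((d:ℝ)/α) - 1 with hedef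
  -- Step 1: replace hatv by min
  have step1 : ∫ y : EuclideanSpace ℝ (Fin d), Ffun θ α d ρ (hatv d α y)
      = ∫ y : EuclideanSpace ℝ (Fin d), Ffun θ α d ρ (min (‖y‖ ^ (-α)) 1) := by
    apply integral_congr_ae
    have h0 : volume ({(0:EuclideanSpace ℝ (Fin d))} : Set (EuclideanSpace ℝ (Fin d))) = 0 :=
      measure_singleton _
    filter_upwards [compl_mem_ae_iff.mpr h0] with y hy
    have hy0 : y ≠ 0 := hy
    rw [hatv, if_neg hy0]
  -- Step 2: polar coordinates
  have step2 : ∫ y : EuclideanSpace ℝ (Fin d), Ffun θ α d ρ (min (‖y‖ ^ (-α)) 1)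
      = d • (volume (Metric.ball (0 : EuclideanSpace ℝ (Fin d)) 1)).toReal •
          ∫ r in Ioi (0:ℝ), r ^ (d - 1) • Ffun θ α d ρ (min (r ^ (-α)) 1) := by
    have := MeasureTheory.integral_fun_norm_addHaar
      (volume : Measure (EuclideanSpace ℝ (Fin d)))
      (fun r => Ffun θ α d ρ (min (r ^ (-α)) 1))
    simpa [finrank_euclideanSpace_fin, measureReal_def] using this
  -- Step 3: substitution t = r ^ (-α)
  have step3 : ∫ r in Ioi (0:ℝ), r ^ (d - 1) • Ffun θ α d ρ (min (r ^ (-α)) 1)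
      = ∫ t in Ioi (0:ℝ), (α⁻¹ * t ^ e) • Ffun θ α d ρ (min t 1) := by
    rw [← integral_comp_rpow_Ioi (fun t => (α⁻¹ * t ^ e) • Ffun θ α d ρ (min t 1))
      (show (-α) ≠ 0 by linarith)]
    apply setIntegral_congr_fun measurableSet_Ioi
    intro x hx
    have hx0 : (0:ℝ) < x := hx
    simp only
    rw [smul_smul]
    congr 1
    have h1 : (x ^ (-α)) ^ e = x ^ ((d:ℝ) + α) := by
      rw [← Real.rpow_mul hx0.le]
      congr 1
      rw [hedef]; field_simp; ring
    have h2 : (x : ℝ) ^ (d - 1 : ℕ) = x ^ ((d:ℝ) - 1) := by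
      rw [← Real.rpow_natCast x (d-1)]
      congr 1
      rw [Nat.cast_sub hd]; norm_num
    have h3 : x ^ (-α - 1) * x ^ ((d:ℝ) + α) = x ^ ((d:ℝ) - 1) := by
      rw [← Real.rpow_add hx0]; ring_nf
    rw [h1, h2, ← h3, abs_neg, abs_of_pos hα0]
    field_simp
  -- integrability on the two pieces
  have he1 : e < -1 := by rw [hedef]; linarith
  have he2 : (-1:ℝ) < e + 2 := by rw [hedef]; linarith
  have hcontF : Continuous (fun v : ℝ => Ffun θ α d ρ v) := by
    unfold Ffun; fun_prop
  have hIntIoc : IntegrableOn (fun t => t ^ e • Ffun θ α d ρ (min t 1)) (Ioc 0 1) := by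
    have hbd : Integrable (fun t : ℝ => (θ * ρ ^ ((2 * α - d) / (2 * α))) ^ 2 / 2 * t ^ (e + 2))
        (volume.restrict (Ioc (0:ℝ) 1)) := by
      apply Integrable.const_mul
      have h := intervalIntegral.intervalIntegrable_rpow' (a := 0) (b := 1) he2
      rw [intervalIntegrable_iff_integrableOn_Ioc_of_le zero_le_one] at h
      exact h
    apply Integrable.mono' hbd
    · apply AEStronglyMeasurable.fun_smul
      · apply ContinuousOn.aestronglyMeasurable _ measurableSet_Ioc
        exact fun x hx => (Real.continuousAt_rpow_const x _ (Or.inl (ne_of_gt hx.1))).continuousWithinAt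
      · exact (hcontF.comp (continuous_id.min continuous_const)).aestronglyMeasurable
    · rw [ae_restrict_iff' measurableSet_Ioc]
      filter_upwards with t ht
      have ht0 : 0 < t := ht.1
      have ht1 : t ≤ 1 := ht.2
      rw [min_eq_left ht1, norm_smul, Real.norm_eq_abs, abs_of_nonneg (Real.rpow_nonneg ht0.le _)]
      calc t ^ e * ‖Ffun θ α d ρ t‖
          ≤ t ^ e * ((θ * (ρ ^ ((2 * α - d) / (2 * α)) * t)) ^ 2 / 2 * Real.exp (-(ρ * t))) := by
            apply mul_le_mul_of_nonneg_left (norm_Ffun_le θ α d ρ t) (Real.rpow_nonneg ht0.le _)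
        _ ≤ t ^ e * ((θ * (ρ ^ ((2 * α - d) / (2 * α)) * t)) ^ 2 / 2 * 1) := by
            apply mul_le_mul_of_nonneg_left _ (Real.rpow_nonneg ht0.le _)
            apply mul_le_mul_of_nonneg_left _ (by positivity)
            exact Real.exp_le_one_iff.mpr (by nlinarith)
        _ = (θ * ρ ^ ((2 * α - d) / (2 * α))) ^ 2 / 2 * (t ^ e * t ^ (2:ℕ)) := by ring
        _ = (θ * ρ ^ ((2 * α - d) / (2 * α))) ^ 2 / 2 * t ^ (e + 2) := by
            rw [← Real.rpow_natCast t 2, ← Real.rpow_add ht0]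
            norm_num
  have hIntIoi : IntegrableOn (fun t => t ^ e • Ffun θ α d ρ (min t 1)) (Ioi 1) := by
    apply IntegrableOn.congr_fun (f := fun t => t ^ e • Ffun θ α d ρ 1)
    · exact (integrableOn_Ioi_rpow_of_lt he1 one_pos).smul_const _
    · intro t ht
      simp only [min_eq_right (le_of_lt (Set.mem_Ioi.mp ht))]
    · exact measurableSet_Ioi
  -- Step 4: split the integral
  have step4 : ∫ t in Ioi (0:ℝ), (α⁻¹ * t ^ e) • Ffun θ α d ρ (min t 1)
      = α⁻¹ • ((∫ t in Ioc (0:ℝ) 1, t ^ e • Ffun θ α d ρ t) + (α/(d:ℝ)) • Ffun θ α d ρ 1) := by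
    have hsmul : ∀ t : ℝ, (α⁻¹ * t ^ e) • Ffun θ α d ρ (min t 1)
        = α⁻¹ • (t ^ e • Ffun θ α d ρ (min t 1)) := by
      intro t; rw [smul_smul]
    simp_rw [hsmul]
    rw [integral_smul]
    congr 1
    rw [← Set.Ioc_union_Ioi_eq_Ioi (zero_le_one (α := ℝ)),
      setIntegral_union (Set.Ioc_disjoint_Ioi le_rfl) measurableSet_Ioi hIntIoc hIntIoi]
    congr 1
    · apply setIntegral_congr_fun measurableSet_Ioc
      intro t ht
      simp only [min_eq_left ht.2]
    · rw [setIntegral_congr_fun measurableSet_Ioi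
        (g := fun t => t ^ e • Ffun θ α d ρ 1) (fun t ht => by simp only [min_eq_right (le_of_lt (Set.mem_Ioi.mp ht))]),
        integral_smul_const, integral_Ioi_rpow_of_lt he1 one_pos]
      congr 1
      rw [Real.one_rpow, hedef]
      field_simp
      rw [show -(d:ℝ) - α + α = -d by ring, div_neg, div_self hd0.ne', neg_neg]
  -- Step 5: rescale t = u / ρ
  have step5 : ∫ t in Ioc (0:ℝ) 1, t ^ e • Ffun θ α d ρ t = ∫ u in Ioi (0:ℝ), Gfun θ α d ρ u := by
    set g : ℝ → ℂ := (Set.Ioc (0:ℝ) 1).indicator (fun t => t ^ e • Ffun θ α d ρ t) with hgdef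
    have h1 : ∫ t in Ioc (0:ℝ) 1, t ^ e • Ffun θ α d ρ t = ∫ t in Ioi (0:ℝ), g t := by
      rw [hgdef, setIntegral_indicator measurableSet_Ioc,
        Set.inter_eq_right.mpr (Set.Ioc_subset_Ioi_self)]
    have h2 := integral_comp_mul_left_Ioi g 0 (inv_pos.mpr hρ0)
    rw [mul_zero, inv_inv] at h2
    have h3 : ∀ u ∈ Ioi (0:ℝ), g (ρ⁻¹ * u) = ρ • Gfun θ α d ρ u := by
      intro u hu
      have hu0 : (0:ℝ) < u := hu
      rw [hgdef, Gfun]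
      by_cases hmem : u ∈ Set.Ioc (0:ℝ) ρ
      · have hmem' : ρ⁻¹ * u ∈ Set.Ioc (0:ℝ) 1 := by
          constructor
          · positivity
          · rw [inv_mul_eq_div, div_le_one hρ0]; exact hmem.2
        rw [Set.indicator_of_mem hmem, Set.indicator_of_mem hmem']
        have hsc : (ρ⁻¹ * u) ^ e = (ρ ^ ((d:ℝ)/α) * ρ) * u ^ e := by
          rw [Real.mul_rpow (inv_nonneg.mpr hρ0.le) hu0.le, ← Real.rpow_neg_one ρ,
            ← Real.rpow_mul hρ0.le]
          congr 1
          rw [show ρ ^ ((d:ℝ)/α) * ρ = ρ ^ ((d:ℝ)/α + 1) by rw [Real.rpow_add hρ0, Real.rpow_one]]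
          congr 1
          rw [hedef]; ring
        have harg1 : ρ ^ ((2 * α - d) / (2 * α)) * (ρ⁻¹ * u) = ρ ^ (-((d:ℝ)/(2*α))) * u := by
          rw [← mul_assoc]
          congr 1
          rw [← Real.rpow_neg_one ρ, ← Real.rpow_add hρ0]
          congr 1
          field_simp
          ring
        have harg2 : ρ * (ρ⁻¹ * u) = u := by field_simp
        rw [Ffun, harg1, harg2, hsc, smul_smul]
        congr 1
        ring
      · have hmem' : ρ⁻¹ * u ∉ Set.Ioc (0:ℝ) 1 := by
          intro hc
          apply hmem
          constructor
          · exact hu0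
          · have := hc.2
            rw [inv_mul_eq_div, div_le_one hρ0] at this
            exact this
        rw [Set.indicator_of_notMem hmem, Set.indicator_of_notMem hmem', smul_zero]
    have h4 : ∫ x in Ioi (0:ℝ), g (ρ⁻¹ * x) = ρ • ∫ u in Ioi (0:ℝ), Gfun θ α d ρ u := by
      rw [setIntegral_congr_fun measurableSet_Ioi h3, integral_smul]
    have h5 : (∫ t in Ioi (0:ℝ), g t) = ∫ u in Ioi (0:ℝ), Gfun θ α d ρ u := by
      apply smul_right_injective ℂ hρ0.ne'
      show ρ • (∫ t in Ioi (0:ℝ), g t) = ρ • ∫ u in Ioi (0:ℝ), Gfun θ α d ρ u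
      rw [← h2, h4]
    rw [h1, h5]
  rw [step1, step2, step3, step4, step5, ← Nat.cast_smul_eq_nsmul ℝ, smul_smul, sigmad]

/-- The centered characteristic-function integral converges:
`∫ (e^{iθρ^{(2α-d)/(2α)} v̂(y)} - 1 - iθρ^{(2α-d)/(2α)} v̂(y)) e^{-ρ v̂(y)} dy
  → -(θ²/2)(σ_d/α)Γ((2α-d)/α)` as `ρ → ∞`. -/
theorem stmt8 (d : ℕ) (hd : 1 ≤ d) (α : ℝ) (hα : (d : ℝ) < α) (θ : ℝ) :
    Filter.Tendsto
      (fun ρ : ℝ =>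
        ∫ y : EuclideanSpace ℝ (Fin d),
          (Complex.exp (Complex.I * (θ : ℂ) *
              ((ρ ^ ((2 * α - d) / (2 * α)) * hatv d α y : ℝ) : ℂ)) - 1 -
            Complex.I * (θ : ℂ) * ((ρ ^ ((2 * α - d) / (2 * α)) * hatv d α y : ℝ) : ℂ)) *
            Complex.exp (-((ρ * hatv d α y : ℝ) : ℂ)))
      atTop
      (nhds ((-(θ ^ 2 / 2) * (sigmad d / α * Real.Gamma ((2 * α - d) / α)) : ℝ) : ℂ)) := by
  have hα0 : (0:ℝ) < α := lt_of_le_of_lt (by exact_mod_cast Nat.zero_le d) hα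
  have hd0 : (0:ℝ) < d := by exact_mod_cast hd
  have hmain : Tendsto
      (fun ρ : ℝ => sigmad d • (α⁻¹ • ((∫ u in Ioi (0:ℝ), Gfun θ α d ρ u)
          + (α/(d:ℝ)) • Ffun θ α d ρ 1))) atTop
      (nhds ((-(θ ^ 2 / 2) * (sigmad d / α * Real.Gamma ((2 * α - d) / α)) : ℝ) : ℂ)) := by
    have h1 := (tendstoG d hd α hα θ).add ((tendstoErr d hd α hα θ).const_smul (α/(d:ℝ)))
    have h2 := (h1.const_smul α⁻¹).const_smul (sigmad d)
    convert h2 using 2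
    rw [smul_zero, add_zero]
    have hexp : (2 * α - d) / α = 2 - (d:ℝ)/α := by field_simp
    rw [hexp, Complex.real_smul, Complex.real_smul, ← Complex.ofReal_mul, ← Complex.ofReal_mul]
    congr 1
    field_simp
  apply hmain.congr'
  filter_upwards [eventually_ge_atTop (1:ℝ)] with ρ hρ
  exact (eventEq d hd α hα θ hρ).symm
end

section
/- Let $d \ge 1$ be an integer, $\alpha \in (d, d+2)$, and let $c_0, M > 0$ and $\gamma > d$. For $t > 1$ set $\rho(t) = c_0 (\log t)^{\alpha/d}$ and let $B_{2M}(t)$ be the open ball in $\mathbb{R}^d$ of radius $2M(\log t)^{(\alpha-d+2)/(4d)}$ centered at the origin. Then $\int_{\mathbb{R}^d \setminus B_{2M}(t)} |y|^{-\gamma}\, e^{-\rho(t)\,\hat v(y)}\,\mathrm{d}y = O\bigl((\log t)^{\frac{d-\gamma}{d}}\bigr)$ as $t \to \infty$. -/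
open MeasureTheory Real Filter Asymptotics
open scoped Classical

section Aux

variable {d : ℕ}

/-- For `u ∈ (0,1]` and `γ ≤ n·α`, `u^(-γ) e^(-c₀ u^(-α)) ≤ n! / c₀^n`. -/
lemma aux_small_bound {c₀ α γ : ℝ} (hc₀ : 0 < c₀) (hα : 0 < α) (hγ : 0 < γ)
    {n : ℕ} (hn : γ ≤ n * α) {u : ℝ} (hu0 : 0 < u) (hu1 : u ≤ 1) :
    u ^ (-γ) * Real.exp (-(c₀ * u ^ (-α))) ≤ n.factorial / c₀ ^ n := by
  set w : ℝ := u ^ (-α) with hw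
  have hw0 : 0 < w := Real.rpow_pos_of_pos hu0 _
  have h1 : u ^ (-γ) ≤ w ^ n := by
    have : w ^ n = u ^ (-(n * α)) := by
      rw [hw, ← Real.rpow_natCast (u ^ (-α)) n, ← Real.rpow_mul hu0.le]
      ring_nf
    rw [this]
    exact Real.rpow_le_rpow_of_exponent_ge hu0 hu1 (by linarith)
  have h2 : Real.exp (-(c₀ * w)) ≤ n.factorial / (c₀ * w) ^ n := by
    have hcw : 0 ≤ c₀ * w := by positivity
    have hterm : (c₀ * w) ^ n / n.factorial ≤ Real.exp (c₀ * w) := by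
      calc (c₀ * w) ^ n / n.factorial
          ≤ ∑ i ∈ Finset.range (n + 1), (c₀ * w) ^ i / i.factorial := by
            refine Finset.single_le_sum (f := fun i => (c₀ * w) ^ i / i.factorial)
              (fun i _ => by positivity) (Finset.self_mem_range_succ n)
        _ ≤ Real.exp (c₀ * w) := Real.sum_le_exp_of_nonneg hcw _
    have hpow : (0:ℝ) < (c₀ * w) ^ n := by positivity
    have h' : (c₀ * w) ^ n ≤ n.factorial * Real.exp (c₀ * w) := by
      rw [div_le_iff₀ (by positivity : (0:ℝ) < (n.factorial : ℝ))] at hterm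
      linarith
    rw [Real.exp_neg, le_div_iff₀ hpow]
    calc (Real.exp (c₀ * w))⁻¹ * (c₀ * w) ^ n
        ≤ (Real.exp (c₀ * w))⁻¹ * (n.factorial * Real.exp (c₀ * w)) := by
          exact mul_le_mul_of_nonneg_left h' (by positivity)
      _ = n.factorial := by field_simp
  calc u ^ (-γ) * Real.exp (-(c₀ * w)) ≤ w ^ n * (n.factorial / (c₀ * w) ^ n) := by
        refine mul_le_mul h1 h2 (Real.exp_pos _).le (by positivity)
    _ = n.factorial / c₀ ^ n := by
        rw [mul_pow]
        field_simp

end Aux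

/-- With `ρ(t) = c₀(log t)^{α/d}` and `B_{2M}(t)` the ball of radius
`2M(log t)^{(α-d+2)/(4d)}`, for `γ > d`,
`∫_{ℝ^d ∖ B_{2M}(t)} |y|^{-γ} e^{-ρ(t) v̂(y)} dy = O((log t)^{(d-γ)/d})` as `t → ∞`. -/
theorem stmt11 (d : ℕ) (hd : 1 ≤ d) (α c₀ M γ : ℝ) (hα₁ : (d : ℝ) < α) (hα₂ : α < d + 2)
    (hc₀ : 0 < c₀) (hM : 0 < M) (hγ : (d : ℝ) < γ) :
    (fun t : ℝ =>
        ∫ y in (Metric.ball (0 : EuclideanSpace ℝ (Fin d))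
            (2 * M * Real.log t ^ ((α - d + 2) / (4 * d))))ᶜ,
          ‖y‖ ^ (-γ) * Real.exp (-(c₀ * Real.log t ^ (α / d) * hatv d α y)))
      =O[atTop] fun t => Real.log t ^ (((d : ℝ) - γ) / d) := by
  have hd0 : (0 : ℝ) < d := by exact_mod_cast hd
  have hα0 : 0 < α := lt_trans hd0 hα₁
  have hγ0 : 0 < γ := lt_trans hd0 hγ
  set E := EuclideanSpace ℝ (Fin d) with hE
  have hfinn : Module.finrank ℝ E = d := finrank_euclideanSpace_fin
  have hfin : (Module.finrank ℝ E : ℝ) = d := by exact_mod_cast congrArg Nat.cast hfinn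
  -- the rescaled profile
  set h₀ : E → ℝ := fun z => ‖z‖ ^ (-γ) * Real.exp (-(c₀ * ‖z‖ ^ (-α))) with hh₀
  set n : ℕ := ⌈γ / α⌉₊ with hn
  have hγn : γ ≤ n * α := by
    have := Nat.le_ceil (γ / α)
    calc γ = γ / α * α := by field_simp
      _ ≤ n * α := by
          gcongr
  set B : ℝ := n.factorial / c₀ ^ n with hB
  have hB0 : 0 < B := by positivity
  set K : ℝ := max 1 B * 2 ^ γ with hK
  have hK0 : 0 < K := by positivity
  -- global domination of h₀
  have hdom : ∀ z : E, ‖h₀ z‖ ≤ K * (1 + ‖z‖) ^ (-γ) := by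
    intro z
    have hz0 : (0 : ℝ) ≤ ‖z‖ := norm_nonneg z
    have hpos : 0 ≤ h₀ z := by
      have : (0:ℝ) ≤ ‖z‖ ^ (-γ) := Real.rpow_nonneg hz0 _
      positivity
    rw [Real.norm_of_nonneg hpos]
    rcases le_or_gt ‖z‖ 1 with h1 | h1
    · -- small case
      have hb : h₀ z ≤ B := by
        rcases eq_or_lt_of_le hz0 with h0 | h0
        · have hz : ‖z‖ = 0 := h0.symm
          simp only [hh₀, hz, Real.zero_rpow (neg_ne_zero.2 hγ0.ne'), zero_mul]
          exact hB0.le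
        · exact aux_small_bound hc₀ hα0 hγ0 hγn h0 h1
      have h2 : (1:ℝ) ≤ 2 ^ γ * (1 + ‖z‖) ^ (-γ) := by
        have hb2 : (1 + ‖z‖) ^ (-γ) ≥ (2:ℝ) ^ (-γ) :=
          Real.rpow_le_rpow_of_nonpos (by linarith) (by linarith) (by linarith)
        calc (1:ℝ) = 2 ^ γ * 2 ^ (-γ) := by
              rw [← Real.rpow_add (by norm_num)]; simp
          _ ≤ 2 ^ γ * (1 + ‖z‖) ^ (-γ) := by
              gcongr
      calc h₀ z ≤ B := hb
        _ = B * 1 := (mul_one B).symm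
        _ ≤ max 1 B * (2 ^ γ * (1 + ‖z‖) ^ (-γ)) := by
            refine mul_le_mul (le_max_right _ _) h2 zero_le_one ?_
            positivity
        _ = K * (1 + ‖z‖) ^ (-γ) := by rw [hK]; ring
    · -- large case
      have hb : h₀ z ≤ ‖z‖ ^ (-γ) := by
        have : Real.exp (-(c₀ * ‖z‖ ^ (-α))) ≤ 1 := by
          rw [Real.exp_le_one_iff]
          have : (0:ℝ) ≤ ‖z‖ ^ (-α) := Real.rpow_nonneg hz0 _
          nlinarith
        calc h₀ z ≤ ‖z‖ ^ (-γ) * 1 := by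
              refine mul_le_mul_of_nonneg_left this (Real.rpow_nonneg hz0 _)
          _ = ‖z‖ ^ (-γ) := mul_one _
      have h2 : ‖z‖ ^ (-γ) ≤ 2 ^ γ * (1 + ‖z‖) ^ (-γ) := by
        have hb2 : (1 + ‖z‖) ^ (-γ) ≥ (2 * ‖z‖) ^ (-γ) :=
          Real.rpow_le_rpow_of_nonpos (by linarith) (by linarith) (by linarith)
        have : (2 * ‖z‖) ^ (-γ) = 2 ^ (-γ) * ‖z‖ ^ (-γ) :=
          Real.mul_rpow (by norm_num) hz0
        calc ‖z‖ ^ (-γ) = 2 ^ γ * (2 ^ (-γ) * ‖z‖ ^ (-γ)) := by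
              rw [← mul_assoc, ← Real.rpow_add (by norm_num)]
              simp
          _ = 2 ^ γ * (2 * ‖z‖) ^ (-γ) := by rw [this]
          _ ≤ 2 ^ γ * (1 + ‖z‖) ^ (-γ) := by
              gcongr
      calc h₀ z ≤ ‖z‖ ^ (-γ) := hb
        _ ≤ 2 ^ γ * (1 + ‖z‖) ^ (-γ) := h2
        _ = 1 * (2 ^ γ * (1 + ‖z‖) ^ (-γ)) := (one_mul _).symm
        _ ≤ max 1 B * (2 ^ γ * (1 + ‖z‖) ^ (-γ)) := by
            refine mul_le_mul_of_nonneg_right (le_max_left _ _) ?_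
            positivity
        _ = K * (1 + ‖z‖) ^ (-γ) := by rw [hK]; ring
  have hdommeas : Integrable (fun z : E => K * (1 + ‖z‖) ^ (-γ)) := by
    refine (integrable_one_add_norm ?_).const_mul K
    rw [hfin]; exact hγ
  have hmeas₀ : AEStronglyMeasurable h₀ (volume : Measure E) := by
    apply Measurable.aestronglyMeasurable
    fun_prop
  have hint₀ : Integrable h₀ := hdommeas.mono' hmeas₀ (Filter.Eventually.of_forall hdom)
  set C₀ : ℝ := ∫ z, h₀ z with hC₀
  have hC₀0 : 0 ≤ C₀ := by
    refine integral_nonneg fun z => ?_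
    have : (0:ℝ) ≤ ‖z‖ ^ (-γ) := Real.rpow_nonneg (norm_nonneg z) _
    positivity
  -- eventual facts
  set β : ℝ := (α - d + 2) / (4 * d) with hβ
  have hβ0 : 0 < β := by
    apply div_pos <;> [linarith; linarith]
  have hev1 : ∀ᶠ t : ℝ in atTop, 1 ≤ Real.log t :=
    Real.tendsto_log_atTop.eventually_ge_atTop 1
  have hev2 : ∀ᶠ t : ℝ in atTop, 1 ≤ 2 * M * Real.log t ^ β := by
    have h : Filter.Tendsto (fun t : ℝ => 2 * M * Real.log t ^ β) atTop atTop := by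
      refine Filter.Tendsto.const_mul_atTop (by positivity) ?_
      exact (tendsto_rpow_atTop hβ0).comp Real.tendsto_log_atTop
    exact h.eventually_ge_atTop 1
  rw [Asymptotics.isBigO_iff]
  refine ⟨C₀, ?_⟩
  filter_upwards [hev1, hev2] with t hL1 hr1
  set L : ℝ := Real.log t with hLdef
  have hL0 : 0 < L := lt_of_lt_of_le one_pos hL1
  set r : ℝ := 2 * M * L ^ β with hr
  set s : ℝ := L ^ ((1:ℝ) / d) with hs
  have hs0 : 0 < s := Real.rpow_pos_of_pos hL0 _
  set H : E → ℝ := fun y => ‖y‖ ^ (-γ) * Real.exp (-(c₀ * L ^ (α / d) * ‖y‖ ^ (-α))) with hH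
  have hHnonneg : ∀ y : E, 0 ≤ H y := fun y => by
    have : (0:ℝ) ≤ ‖y‖ ^ (-γ) := Real.rpow_nonneg (norm_nonneg y) _
    positivity
  -- H is integrable: dominated by h₀ (since L^(α/d) ≥ 1)
  have hLα : (1:ℝ) ≤ L ^ (α / d) := Real.one_le_rpow hL1 (by positivity)
  have hHle : ∀ y : E, H y ≤ h₀ y := fun y => by
    have h1 : (0:ℝ) ≤ ‖y‖ ^ (-α) := Real.rpow_nonneg (norm_nonneg y) _
    have h2 : (0:ℝ) ≤ ‖y‖ ^ (-γ) := Real.rpow_nonneg (norm_nonneg y) _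
    refine mul_le_mul_of_nonneg_left (Real.exp_le_exp.2 ?_) h2
    have h3 := mul_le_mul_of_nonneg_right (mul_le_mul_of_nonneg_left hLα hc₀.le) h1
    rw [mul_one] at h3
    linarith
  have hHmeas : AEStronglyMeasurable H (volume : Measure E) := by
    apply Measurable.aestronglyMeasurable
    fun_prop
  have hintH : Integrable H := by
    refine hint₀.mono' hHmeas (Filter.Eventually.of_forall fun y => ?_)
    rw [Real.norm_of_nonneg (hHnonneg y)]
    exact hHle y
  -- the integrand equals H on the complement of the ball
  have hcongr :
      ∫ y in (Metric.ball (0 : E) r)ᶜ,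
          ‖y‖ ^ (-γ) * Real.exp (-(c₀ * L ^ (α / d) * hatv d α y))
        = ∫ y in (Metric.ball (0 : E) r)ᶜ, H y := by
    refine setIntegral_congr_fun measurableSet_ball.compl fun y hy => ?_
    have hyr : r ≤ ‖y‖ := by
      have := hy
      simp only [Set.mem_compl_iff, Metric.mem_ball, dist_zero_right, not_lt] at this
      exact this
    have hy1 : (1:ℝ) ≤ ‖y‖ := le_trans hr1 hyr
    have hy0 : y ≠ 0 := by
      intro h
      rw [h, norm_zero] at hy1
      linarith
    have : hatv d α y = ‖y‖ ^ (-α) := by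
      rw [hatv, if_neg hy0, min_eq_left]
      exact Real.rpow_le_one_of_one_le_of_nonpos hy1 (by linarith)
    rw [this]
  -- scaling identity: ∫ H = L^((d-γ)/d) * C₀
  have hscale : ∀ z : E, H (s • z) = s ^ (-γ) * h₀ z := by
    intro z
    have hz0 : (0:ℝ) ≤ ‖z‖ := norm_nonneg z
    have hnorm : ‖s • z‖ = s * ‖z‖ := by
      rw [norm_smul, Real.norm_of_nonneg hs0.le]
    have hdne : (d:ℝ) ≠ 0 := hd0.ne'
    have hsα : s ^ (-α) * L ^ (α / d) = 1 := by
      rw [hs, ← Real.rpow_mul hL0.le, ← Real.rpow_add hL0,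
        show (1:ℝ) / d * -α + α / d = 0 by field_simp; ring, Real.rpow_zero]
    simp only [hH, hh₀]
    rw [hnorm, Real.mul_rpow hs0.le hz0, Real.mul_rpow hs0.le hz0]
    have : c₀ * L ^ (α / d) * (s ^ (-α) * ‖z‖ ^ (-α)) = c₀ * ‖z‖ ^ (-α) := by
      calc c₀ * L ^ (α / d) * (s ^ (-α) * ‖z‖ ^ (-α))
          = c₀ * (s ^ (-α) * L ^ (α / d)) * ‖z‖ ^ (-α) := by ring
        _ = c₀ * ‖z‖ ^ (-α) := by rw [hsα, mul_one]
    rw [this]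
    ring
  have hdne : (d:ℝ) ≠ 0 := hd0.ne'
  have hintegral : ∫ y, H y = L ^ (((d:ℝ) - γ) / d) * C₀ := by
    have hcs := MeasureTheory.Measure.integral_comp_smul (volume : Measure E) H s
    have h1 : ∫ x, H (s • x) = s ^ (-γ) * C₀ := by
      simp_rw [hscale]
      rw [integral_const_mul]
    have h2 : |((s ^ Module.finrank ℝ E)⁻¹ : ℝ)|
        = s ^ (-((Module.finrank ℝ E : ℕ) : ℝ)) := by
      rw [abs_of_nonneg (by positivity), Real.rpow_neg hs0.le, Real.rpow_natCast]
    rw [h1, h2, smul_eq_mul, hfin] at hcs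
    have hsd : s ^ (-(d:ℝ)) * s ^ ((d:ℝ)) = 1 := by
      rw [← Real.rpow_add hs0]; simp
    have hkey : ∫ x, H x = s ^ ((d:ℝ)) * (s ^ (-γ) * C₀) := by
      calc ∫ x, H x = (s ^ ((d:ℝ)) * s ^ (-(d:ℝ))) * ∫ x, H x := by
            rw [mul_comm (s ^ ((d:ℝ))) (s ^ (-(d:ℝ))), hsd, one_mul]
        _ = s ^ ((d:ℝ)) * (s ^ (-(d:ℝ)) * ∫ x, H x) := by ring
        _ = s ^ ((d:ℝ)) * (s ^ (-γ) * C₀) := by rw [← hcs]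
    rw [hkey, ← mul_assoc, ← Real.rpow_add hs0]
    congr 1
    rw [hs, ← Real.rpow_mul hL0.le]
    congr 1
    field_simp
    ring
  -- put it together
  have hsetnonneg :
      0 ≤ ∫ y in (Metric.ball (0 : E) r)ᶜ, H y :=
    setIntegral_nonneg measurableSet_ball.compl fun y _ => hHnonneg y
  have hsetle : ∫ y in (Metric.ball (0 : E) r)ᶜ, H y ≤ ∫ y, H y :=
    setIntegral_le_integral hintH (Filter.Eventually.of_forall hHnonneg)
  have hLpow0 : 0 ≤ L ^ (((d:ℝ) - γ) / d) := Real.rpow_nonneg hL0.le _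
  calc ‖∫ y in (Metric.ball (0 : E) r)ᶜ,
          ‖y‖ ^ (-γ) * Real.exp (-(c₀ * L ^ (α / d) * hatv d α y))‖
      = ‖∫ y in (Metric.ball (0 : E) r)ᶜ, H y‖ := by rw [hcongr]
    _ = ∫ y in (Metric.ball (0 : E) r)ᶜ, H y := Real.norm_of_nonneg hsetnonneg
    _ ≤ ∫ y, H y := hsetle
    _ = L ^ (((d:ℝ) - γ) / d) * C₀ := hintegral
    _ = C₀ * L ^ (((d:ℝ) - γ) / d) := mul_comm _ _
    _ ≤ C₀ * ‖L ^ (((d:ℝ) - γ) / d)‖ := by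
        rw [Real.norm_of_nonneg hLpow0]
end

section
/- Let $\alpha > 1$ and consider dimension $d = 1$. There exist $\epsilon_0 > 0$ and $\rho_0 \ge 1$ such that for all $\rho \ge \rho_0$ and all real $\theta$ with $|\theta| \le \epsilon_0\, \rho^{1/(2\alpha)}$, $\int_{\mathbb{R}} \bigl( 1 - \cos\bigl(\theta\, \rho^{\frac{2\alpha-1}{2\alpha}}\, \hat v(y)\bigr) \bigr)\, e^{-\rho\,\hat v(y)}\,\mathrm{d}y \;\ge\; 2^{-2\alpha-2}\, e^{-1}\, \theta^2$. -/
open MeasureTheory Real Filter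

/-- The shape function on `ℝ`: `v̂(y) = min(|y|^{-α}, 1)`, with `v̂(0) = 1`. -/
noncomputable def hatv1 (α : ℝ) (y : ℝ) : ℝ :=
  if y = 0 then 1 else min (|y| ^ (-α)) 1

lemma hatv1_nonneg (α y : ℝ) : 0 ≤ hatv1 α y := by
  unfold hatv1
  split
  · norm_num
  · exact le_min (Real.rpow_nonneg (abs_nonneg y) _) one_pos.le

lemma hatv1_le_one (α y : ℝ) : hatv1 α y ≤ 1 := by
  unfold hatv1
  split
  · norm_num
  · exact min_le_right _ _

lemma measurable_hatv1 (α : ℝ) : Measurable (hatv1 α) := by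
  unfold hatv1
  refine Measurable.ite ?_ measurable_const ?_
  · simpa using measurableSet_singleton (0:ℝ)
  · exact (by fun_prop : Measurable fun y:ℝ => |y| ^ (-α)).min measurable_const

lemma hatv1_even (α y : ℝ) : hatv1 α (-y) = hatv1 α y := by
  unfold hatv1
  simp [neg_eq_zero, abs_neg]

lemma hatv1_sq (α y : ℝ) : hatv1 α y ^ 2 = hatv1 (2*α) y := by
  unfold hatv1
  rcases eq_or_ne y 0 with h | h
  · simp [h]
  · have hy : (0:ℝ) < |y| := abs_pos.2 h
    rw [if_neg h, if_neg h]
    have h2 : |y| ^ (-α) * |y| ^ (-α) = |y| ^ (-(2*α)) := by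
      rw [← Real.rpow_add hy]; ring_nf
    rcases le_total (|y| ^ (-α)) 1 with hle | hle
    · rw [min_eq_left hle, min_eq_left, sq, h2]
      rw [← h2]
      exact mul_le_one₀ hle (Real.rpow_nonneg hy.le _) hle
    · rw [min_eq_right hle, min_eq_right, one_pow]
      rw [← h2]
      nlinarith [Real.rpow_nonneg hy.le (-α)]

lemma integrable_hatv1 {β : ℝ} (hβ : 1 < β) : Integrable (hatv1 β) := by
  have hm : Measurable (hatv1 β) := measurable_hatv1 β
  have h3 : IntegrableOn (hatv1 β) (Set.Ioi 1) := by
    refine (integrableOn_Ioi_rpow_of_lt (by linarith : -β < -1) one_pos).congr_fun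
      (fun y hy => ?_) measurableSet_Ioi
    have hy1 : (1:ℝ) < y := hy
    rw [hatv1, if_neg (by linarith), abs_of_pos (by linarith),
      min_eq_left (Real.rpow_le_one_of_one_le_of_nonpos hy1.le (by linarith))]
  have h2 : IntegrableOn (hatv1 β) (Set.Icc (-1) 1) := by
    refine Measure.integrableOn_of_bounded (M := 1) (by simp) hm.aestronglyMeasurable ?_
    filter_upwards with y using by
      rw [Real.norm_eq_abs, abs_of_nonneg (hatv1_nonneg β y)]; exact hatv1_le_one β y
  have h1 : IntegrableOn (hatv1 β) (Set.Iio (-1)) := by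
    rw [← integrable_indicator_iff measurableSet_Iio]
    have key : (Set.Iio (-1:ℝ)).indicator (hatv1 β)
        = fun y => (Set.Ioi (1:ℝ)).indicator (hatv1 β) (-y) := by
      funext y
      by_cases hy : y < -1
      · rw [Set.indicator_of_mem (by exact hy),
          Set.indicator_of_mem (by simpa using by linarith : -y ∈ Set.Ioi (1:ℝ)), hatv1_even]
      · rw [Set.indicator_of_notMem (by exact hy),
          Set.indicator_of_notMem (by simp; linarith [le_of_not_gt hy])]
    rw [key]
    exact ((integrable_indicator_iff measurableSet_Ioi).mpr h3).comp_neg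
  have huniv : (Set.Iio (-1:ℝ)) ∪ (Set.Icc (-1:ℝ) 1 ∪ Set.Ioi 1) = Set.univ := by
    ext y
    simp only [Set.mem_union, Set.mem_Iio, Set.mem_Icc, Set.mem_Ioi, Set.mem_univ, iff_true]
    rcases lt_or_ge y (-1) with h | h
    · exact Or.inl h
    · rcases le_or_gt y 1 with h' | h'
      · exact Or.inr (Or.inl ⟨h, h'⟩)
      · exact Or.inr (Or.inr h')
  have := h1.union (h2.union h3)
  rwa [huniv, integrableOn_univ] at this

lemma one_sub_cos_ge {t : ℝ} (ht : |t| ≤ 1) : t^2/4 ≤ 1 - Real.cos t := by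
  have hb := Real.cos_bound ht
  have h4 : |t|^4 ≤ |t|^2 := pow_le_pow_of_le_one (abs_nonneg t) ht (by norm_num)
  have h1 : Real.cos t - (1 - t^2/2) ≤ |t|^4 * (5/96) := (abs_sub_le_iff.1 hb).1
  have ht2 : |t|^2 = t^2 := sq_abs t
  nlinarith [sq_nonneg t]

/-- Central-region lower bound: for `|θ| ≤ ε₀ ρ^{1/(2α)}` and `ρ` large,
`∫ (1 - cos(θ ρ^{(2α-1)/(2α)} v̂(y))) e^{-ρ v̂(y)} dy ≥ 2^{-2α-2} e⁻¹ θ²`. -/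
theorem stmt13 (α : ℝ) (hα : 1 < α) :
    ∃ ε₀ > (0 : ℝ), ∃ ρ₀ : ℝ, 1 ≤ ρ₀ ∧ ∀ ρ ≥ ρ₀, ∀ θ : ℝ,
      |θ| ≤ ε₀ * ρ ^ (1 / (2 * α)) →
      (∫ y : ℝ, (1 - Real.cos (θ * (ρ ^ ((2 * α - 1) / (2 * α)) * hatv1 α y))) *
          Real.exp (-(ρ * hatv1 α y)))
        ≥ (2 : ℝ) ^ (-(2 * α) - 2) * Real.exp (-1) * θ ^ 2 := by
  refine ⟨1, one_pos, 1, le_refl 1, fun ρ hρ θ hθ => ?_⟩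
  rw [one_mul] at hθ
  have hρ1 : (1:ℝ) ≤ ρ := hρ
  have hρ0 : (0:ℝ) < ρ := by linarith
  have hα0 : (0:ℝ) < α := by linarith
  set a : ℝ := ρ ^ (α⁻¹) with ha_def
  have ha0 : 0 < a := Real.rpow_pos_of_pos hρ0 _
  have ha1 : 1 ≤ a := Real.one_le_rpow hρ1 (by positivity)
  set c : ℝ := ρ ^ ((2 * α - 1) / (2 * α)) with hc_def
  have hc0 : 0 < c := Real.rpow_pos_of_pos hρ0 _
  set f : ℝ → ℝ := fun y => (1 - Real.cos (θ * (c * hatv1 α y))) *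
      Real.exp (-(ρ * hatv1 α y)) with hf_def
  have hfnn : ∀ y, 0 ≤ f y := fun y =>
    mul_nonneg (by nlinarith [Real.cos_le_one (θ * (c * hatv1 α y))]) (Real.exp_nonneg _)
  have hm := measurable_hatv1 α
  have hmf : Measurable f := by
    apply Measurable.mul
    · exact measurable_const.sub (Real.measurable_cos.comp (((hm.const_mul c).const_mul θ)))
    · exact Real.measurable_exp.comp ((hm.const_mul ρ).neg)
  have hint : Integrable f := by
    refine ((integrable_hatv1 (by linarith : (1:ℝ) < 2*α)).const_mul
      ((θ*c)^2/2)).mono' hmf.aestronglyMeasurable ?_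
    filter_upwards with y
    rw [Real.norm_eq_abs, abs_of_nonneg (hfnn y)]
    have h1 : 1 - Real.cos (θ * (c * hatv1 α y)) ≤ (θ * (c * hatv1 α y))^2/2 := by
      have := Real.one_sub_sq_div_two_le_cos (x := θ * (c * hatv1 α y)); linarith
    have h2 : Real.exp (-(ρ * hatv1 α y)) ≤ 1 := by
      rw [Real.exp_le_one_iff]
      have := hatv1_nonneg α y
      nlinarith
    have h3 : (θ * (c * hatv1 α y))^2/2 = (θ*c)^2/2 * hatv1 (2*α) y := by
      rw [← hatv1_sq]; ring
    calc f y ≤ (θ * (c * hatv1 α y))^2/2 * 1 :=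
          mul_le_mul h1 h2 (Real.exp_nonneg _) (by positivity)
      _ = (θ*c)^2/2 * hatv1 (2*α) y := by rw [mul_one, h3]
  -- a^(-α) = ρ⁻¹
  have haa : a ^ (-α) = ρ⁻¹ := by
    rw [ha_def, ← Real.rpow_mul hρ0.le,
      show α⁻¹ * (-α) = -1 from by field_simp, Real.rpow_neg_one]
  set S : Set ℝ := Set.Ioc a (2*a) with hS_def
  have hSvol : volume S = ENNReal.ofReal a := by
    rw [hS_def, Real.volume_Ioc]; norm_num; ring_nf
  set K : ℝ := (2:ℝ) ^ (-(2*α)-2) * Real.exp (-1) * θ^2 / a with hK_def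
  have hpt : ∀ y ∈ S, K ≤ f y := by
    intro y hy
    obtain ⟨hya, hy2a⟩ := hy
    have hy0 : (0:ℝ) < y := by linarith
    have hy1 : (1:ℝ) < y := by linarith
    have hval : hatv1 α y = y ^ (-α) := by
      rw [hatv1, if_neg (by linarith), abs_of_pos hy0,
        min_eq_left (Real.rpow_le_one_of_one_le_of_nonpos hy1.le (by linarith))]
    set h : ℝ := y ^ (-α) with hh_def
    have hh0 : 0 < h := Real.rpow_pos_of_pos hy0 _
    have hub : h ≤ ρ⁻¹ := by
      have h1 : h ≤ a ^ (-α) := Real.rpow_le_rpow_of_nonpos ha0 hya.le (by linarith)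
      rw [haa] at h1; exact h1
    have hlb : (2:ℝ)^(-α) * ρ⁻¹ ≤ h := by
      have h1 : (2*a) ^ (-α) ≤ h := Real.rpow_le_rpow_of_nonpos hy0 hy2a (by linarith)
      rwa [Real.mul_rpow (by norm_num) ha0.le, haa] at h1
    set t : ℝ := θ * (c * h) with ht_def
    have hch0 : 0 < c * h := mul_pos hc0 hh0
    have habs : |t| ≤ 1 := by
      rw [ht_def, abs_mul, abs_of_pos hch0]
      calc |θ| * (c * h) ≤ ρ ^ (1/(2*α)) * (c * ρ⁻¹) := by
            apply mul_le_mul hθ (mul_le_mul_of_nonneg_left hub hc0.le) hch0.le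
              (Real.rpow_nonneg hρ0.le _)
        _ = 1 := by
            rw [hc_def, ← Real.rpow_neg_one ρ, ← Real.rpow_add hρ0, ← Real.rpow_add hρ0,
              show 1/(2*α) + ((2*α-1)/(2*α) + (-1:ℝ)) = 0 from by field_simp; ring, Real.rpow_zero]
    have hcos : t^2/4 ≤ 1 - Real.cos t := one_sub_cos_ge habs
    have hexp : Real.exp (-1) ≤ Real.exp (-(ρ*h)) := by
      rw [Real.exp_le_exp]
      have : ρ * h ≤ 1 := by
        calc ρ * h ≤ ρ * ρ⁻¹ := mul_le_mul_of_nonneg_left hub hρ0.le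
          _ = 1 := mul_inv_cancel₀ hρ0.ne'
      linarith
    -- rpow identities
    have e1 : c^2 * (ρ⁻¹)^2 * a = 1 := by
      rw [hc_def, ha_def, ← Real.rpow_neg_one ρ,
        ← Real.rpow_natCast (ρ ^ ((2*α-1)/(2*α))) 2, ← Real.rpow_natCast (ρ ^ (-1:ℝ)) 2,
        ← Real.rpow_mul hρ0.le, ← Real.rpow_mul hρ0.le,
        ← Real.rpow_add hρ0, ← Real.rpow_add hρ0,
        show (2*α-1)/(2*α) * ((2:ℕ):ℝ) + (-1:ℝ)*((2:ℕ):ℝ) + α⁻¹ = 0 from by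
          push_cast; field_simp; ring,
        Real.rpow_zero]
    have e2 : ((2:ℝ)^(-α))^2 = (2:ℝ)^(-(2*α)-2) * 4 := by
      rw [← Real.rpow_natCast ((2:ℝ)^(-α)) 2, ← Real.rpow_mul (by norm_num : (0:ℝ) ≤ 2),
        sub_eq_add_neg, Real.rpow_add (by norm_num : (0:ℝ) < 2),
        show (-α) * ((2:ℕ):ℝ) = -(2*α) from by push_cast; ring]
      norm_num
      ring
    have hid : K = (θ * (c * ((2:ℝ)^(-α) * ρ⁻¹)))^2/4 * Real.exp (-1) := by
      rw [hK_def, div_eq_iff ha0.ne']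
      have expand : (θ * (c * ((2:ℝ)^(-α) * ρ⁻¹)))^2
          = θ^2 * (((2:ℝ)^(-α))^2 * (c^2 * (ρ⁻¹)^2)) := by ring
      rw [expand, e2]
      linear_combination (-(θ^2 * (2:ℝ)^(-(2*α)-2) * Real.exp (-1))) * e1
    have ht2 : (θ * (c * ((2:ℝ)^(-α) * ρ⁻¹)))^2 ≤ t^2 := by
      have hsq : (c * ((2:ℝ)^(-α) * ρ⁻¹))^2 ≤ (c*h)^2 :=
        pow_le_pow_left₀ (by positivity) (mul_le_mul_of_nonneg_left hlb hc0.le) 2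
      calc (θ * (c * ((2:ℝ)^(-α) * ρ⁻¹)))^2 = θ^2 * (c * ((2:ℝ)^(-α) * ρ⁻¹))^2 := by ring
        _ ≤ θ^2 * (c*h)^2 := mul_le_mul_of_nonneg_left hsq (sq_nonneg θ)
        _ = t^2 := by rw [ht_def]; ring
    have hKle : K ≤ t^2/4 * Real.exp (-1) := by
      rw [hid]
      exact mul_le_mul_of_nonneg_right (by linarith) (Real.exp_nonneg _)
    have hfy : f y = (1 - Real.cos t) * Real.exp (-(ρ*h)) := by
      simp only [hf_def]; rw [hval]
    rw [hfy]
    calc K ≤ t^2/4 * Real.exp (-1) := hKle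
      _ ≤ (1 - Real.cos t) * Real.exp (-(ρ*h)) :=
          mul_le_mul hcos hexp (Real.exp_nonneg _) (by nlinarith [Real.cos_le_one t])
  have hfin : volume S ≠ ⊤ := by rw [hSvol]; exact ENNReal.ofReal_ne_top
  have h1 := setIntegral_ge_of_const_le measurableSet_Ioc hfin hpt hint.integrableOn
  have h2 : (∫ y in S, f y) ≤ ∫ y, f y :=
    setIntegral_le_integral hint (Filter.Eventually.of_forall hfnn)
  have hKa : K * (volume S).toReal = (2:ℝ) ^ (-(2*α)-2) * Real.exp (-1) * θ^2 := by
    rw [hSvol, ENNReal.toReal_ofReal ha0.le, hK_def, div_mul_cancel₀ _ ha0.ne']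
  rw [ge_iff_le]
  calc (2:ℝ) ^ (-(2*α)-2) * Real.exp (-1) * θ^2 = K * (volume S).toReal := hKa.symm
    _ ≤ ∫ y in S, f y := by rw [smul_eq_mul, mul_comm] at h1; exact h1
    _ ≤ ∫ y, f y := h2
end

section
/- Let $\alpha > 1$ and consider dimension $d = 1$. For every $\epsilon \in (0, 1]$ there exists $\rho_0 \ge 1$ such that for all $\rho \ge \rho_0$ and all real $\theta$ with $|\theta| \ge \epsilon\, \rho^{1/(2\alpha)}$, $\int_{\mathbb{R}} \bigl( 1 - \cos\bigl(\theta\, \rho^{\frac{2\alpha-1}{2\alpha}}\, \hat v(y)\bigr) \bigr)\, e^{-\rho\,\hat v(y)}\,\mathrm{d}y \;\ge\; \bigl(1 - \cos 2^{-\alpha}\bigr)\, e^{-\epsilon^{-\alpha}}\, \rho^{\frac{2\alpha-1}{2\alpha^2}}\, |\theta|^{1/\alpha}$. -/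
open MeasureTheory Real Filter

/-- Tail lower bound: for `|θ| ≥ ε ρ^{1/(2α)}` and `ρ` large,
`∫ (1 - cos(θ ρ^{(2α-1)/(2α)} v̂(y))) e^{-ρ v̂(y)} dy
  ≥ (1 - cos 2^{-α}) e^{-ε^{-α}} ρ^{(2α-1)/(2α²)} |θ|^{1/α}`. -/
theorem stmt14 (α : ℝ) (hα : 1 < α) (ε : ℝ) (hε₀ : 0 < ε) (hε₁ : ε ≤ 1) :
    ∃ ρ₀ : ℝ, 1 ≤ ρ₀ ∧ ∀ ρ ≥ ρ₀, ∀ θ : ℝ,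
      ε * ρ ^ (1 / (2 * α)) ≤ |θ| →
      (∫ y : ℝ, (1 - Real.cos (θ * (ρ ^ ((2 * α - 1) / (2 * α)) * hatv1 α y))) *
          Real.exp (-(ρ * hatv1 α y)))
        ≥ (1 - Real.cos ((2 : ℝ) ^ (-α))) * Real.exp (-(ε ^ (-α))) *
            ρ ^ ((2 * α - 1) / (2 * α ^ 2)) * |θ| ^ (1 / α) := by
  have hα0 : (0 : ℝ) < α := by linarith
  have hεinv : (1 : ℝ) ≤ ε⁻¹ := (one_le_inv₀ hε₀).mpr hε₁
  refine ⟨ε⁻¹, hεinv, ?_⟩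
  intro ρ hρ θ hθ
  have hρ1 : (1 : ℝ) ≤ ρ := le_trans hεinv hρ
  have hρ0 : (0 : ℝ) < ρ := lt_of_lt_of_le one_pos hρ1
  have hθ0 : (0 : ℝ) < |θ| :=
    lt_of_lt_of_le (by positivity) hθ
  set e1 : ℝ := (2 * α - 1) / (2 * α) with he1
  set T : ℝ := |θ| * ρ ^ e1 with hT
  have hρe1 : (0 : ℝ) < ρ ^ e1 := Real.rpow_pos_of_pos hρ0 _
  have hT0 : 0 < T := mul_pos hθ0 hρe1
  have hεT : ε * ρ ≤ T := by
    have hsum : 1 / (2 * α) + e1 = 1 := by rw [he1]; field_simp; ring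
    calc ε * ρ = ε * ρ ^ (1 / (2 * α) + e1) := by rw [hsum, Real.rpow_one]
      _ = ε * ρ ^ (1 / (2 * α)) * ρ ^ e1 := by rw [Real.rpow_add hρ0]; ring
      _ ≤ |θ| * ρ ^ e1 := by
          exact mul_le_mul_of_nonneg_right hθ hρe1.le
  have hερ : (1 : ℝ) ≤ ε * ρ := by
    have := mul_le_mul_of_nonneg_left hρ hε₀.le
    rwa [mul_inv_cancel₀ hε₀.ne'] at this
  have hT1 : (1 : ℝ) ≤ T := le_trans hερ hεT
  set A : ℝ := T ^ (1 / α) with hA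
  have hA1 : (1 : ℝ) ≤ A := by
    have := Real.rpow_le_rpow zero_le_one hT1 (show (0:ℝ) ≤ 1 / α by positivity)
    rwa [Real.one_rpow] at this
  have hA0 : 0 < A := lt_of_lt_of_le one_pos hA1
  have hAT : A ^ α = T := by
    rw [hA, ← Real.rpow_mul hT0.le, one_div, inv_mul_cancel₀ hα0.ne', Real.rpow_one]
  have hAinv : A ^ (-α) = T⁻¹ := by
    rw [Real.rpow_neg hA0.le, hAT]
  -- basic facts about hatv1
  have hv_pos : ∀ y : ℝ, 0 < hatv1 α y := by
    intro y; unfold hatv1; split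
    · norm_num
    · next h => exact lt_min (Real.rpow_pos_of_pos (abs_pos.mpr h) _) one_pos
  have hv_le_one : ∀ y : ℝ, hatv1 α y ≤ 1 := by
    intro y; unfold hatv1; split
    · exact le_refl 1
    · exact min_le_right _ _
  have hv_eq : ∀ y : ℝ, 1 ≤ y → hatv1 α y = y ^ (-α) := by
    intro y hy
    have hy0 : (0 : ℝ) < y := by linarith
    unfold hatv1
    rw [if_neg hy0.ne', abs_of_pos hy0,
      min_eq_left (Real.rpow_le_one_of_one_le_of_nonpos hy (by linarith))]
  have hv_meas : Measurable (hatv1 α) := by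
    have hrep : hatv1 α = fun y => if y = 0 then 1
        else min (Real.exp (Real.log |y| * (-α))) 1 := by
      funext y; unfold hatv1; split
      · rfl
      · next h => rw [Real.rpow_def_of_pos (abs_pos.mpr h)]
    rw [hrep]
    exact Measurable.ite (measurableSet_eq) measurable_const
      (((Real.measurable_log.comp measurable_abs).mul_const (-α)).exp.min measurable_const)
  set f : ℝ → ℝ := fun y =>
      (1 - Real.cos (θ * (ρ ^ e1 * hatv1 α y))) * Real.exp (-(ρ * hatv1 α y)) with hf
  have hf_nonneg : ∀ y, 0 ≤ f y := by
    intro y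
    have := Real.cos_le_one (θ * (ρ ^ e1 * hatv1 α y))
    exact mul_nonneg (by linarith) (Real.exp_nonneg _)
  have hf_meas : Measurable f := by
    rw [hf]
    exact (measurable_const.sub
        (Real.measurable_cos.comp (measurable_const.mul (measurable_const.mul hv_meas)))).mul
      (Real.measurable_exp.comp (measurable_const.mul hv_meas).neg)
  have hexp_le_one : ∀ y : ℝ, Real.exp (-(ρ * hatv1 α y)) ≤ 1 := by
    intro y
    have h1 : -(ρ * hatv1 α y) ≤ 0 := by nlinarith [hv_pos y]
    have := Real.exp_le_exp.mpr h1
    rwa [Real.exp_zero] at this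
  have hf_le_two : ∀ y, f y ≤ 2 := by
    intro y
    have h1 : 1 - Real.cos (θ * (ρ ^ e1 * hatv1 α y)) ≤ 2 := by
      have := Real.neg_one_le_cos (θ * (ρ ^ e1 * hatv1 α y)); linarith
    have h3 : (0 : ℝ) ≤ 1 - Real.cos (θ * (ρ ^ e1 * hatv1 α y)) := by
      have := Real.cos_le_one (θ * (ρ ^ e1 * hatv1 α y)); linarith
    calc f y ≤ 2 * 1 := mul_le_mul h1 (hexp_le_one y) (Real.exp_nonneg _) (by norm_num)
      _ = 2 := by ring
  have hK : ∀ y : ℝ, 1 ≤ y → f y ≤ (θ * ρ ^ e1) ^ 2 / 2 * y ^ (-(2 * α)) := by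
    intro y hy
    have hy0 : (0 : ℝ) < y := by linarith
    have hv := hv_eq y hy
    have hsq : (y ^ (-α)) ^ 2 = y ^ (-(2 * α)) := by
      rw [← Real.rpow_natCast (y ^ (-α)) 2, ← Real.rpow_mul hy0.le]
      norm_num; ring_nf
    have hx2 : (θ * (ρ ^ e1 * hatv1 α y)) ^ 2 / 2
        = (θ * ρ ^ e1) ^ 2 / 2 * y ^ (-(2 * α)) := by
      rw [hv, ← hsq]; ring
    have hcosb : 1 - Real.cos (θ * (ρ ^ e1 * hatv1 α y))
        ≤ (θ * (ρ ^ e1 * hatv1 α y)) ^ 2 / 2 := by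
      have := Real.one_sub_sq_div_two_le_cos (x := θ * (ρ ^ e1 * hatv1 α y))
      linarith
    calc f y ≤ ((θ * (ρ ^ e1 * hatv1 α y)) ^ 2 / 2) * 1 :=
          mul_le_mul hcosb (hexp_le_one y) (Real.exp_nonneg _) (by positivity)
      _ = (θ * ρ ^ e1) ^ 2 / 2 * y ^ (-(2 * α)) := by rw [← hx2]; ring
  have hint : Integrable f := by
    have h1 : IntegrableOn f (Set.Icc (-1 : ℝ) 1) := by
      apply Measure.integrableOn_of_bounded (M := 2) measure_Icc_lt_top.ne
        hf_meas.aestronglyMeasurable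
      filter_upwards with y
      rw [Real.norm_eq_abs, abs_of_nonneg (hf_nonneg y)]
      exact hf_le_two y
    have h2 : IntegrableOn f (Set.Ioi (1 : ℝ)) := by
      apply Integrable.mono'
        ((integrableOn_Ioi_rpow_of_lt (show -(2 * α) < -1 by linarith) one_pos).const_mul
          ((θ * ρ ^ e1) ^ 2 / 2))
      · exact hf_meas.aestronglyMeasurable.restrict
      · filter_upwards [ae_restrict_mem measurableSet_Ioi] with y hy
        rw [Real.norm_eq_abs, abs_of_nonneg (hf_nonneg y)]
        exact hK y (le_of_lt hy)
    have h3 : IntegrableOn f (Set.Iio (-1 : ℝ)) := by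
      have hfe : ∀ y : ℝ, f (-y) = f y := by
        intro y
        have hveq : hatv1 α (-y) = hatv1 α y := by
          unfold hatv1; simp [neg_eq_zero, abs_neg]
        rw [hf]; simp only [hveq]
      rw [← (Measure.measurePreserving_neg (volume : Measure ℝ)).integrableOn_comp_preimage
          (Homeomorph.neg ℝ).measurableEmbedding]
      have hset : (Neg.neg ⁻¹' Set.Iio (-1 : ℝ) : Set ℝ) = Set.Ioi 1 := by
        ext x
        simp only [Set.mem_preimage, Set.mem_Iio, Set.mem_Ioi]
        constructor <;> intro h <;> linarith
      simp only [Function.comp_def, hset, hfe]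
      exact h2
    rw [← integrableOn_univ]
    have huniv : (Set.univ : Set ℝ) = Set.Iio (-1) ∪ (Set.Icc (-1) 1 ∪ Set.Ioi 1) := by
      ext x
      simp only [Set.mem_univ, Set.mem_union, Set.mem_Iio, Set.mem_Icc, Set.mem_Ioi, true_iff]
      by_cases h : x < -1
      · left; exact h
      · right
        by_cases h' : x ≤ 1
        · left; exact ⟨le_of_not_gt h, h'⟩
        · right; exact lt_of_not_ge h'
    rw [huniv]
    exact h3.union (h1.union h2)
  set c : ℝ := (1 - Real.cos ((2 : ℝ) ^ (-α))) * Real.exp (-(ε ^ (-α))) with hc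
  have hlb : ∀ y ∈ Set.Icc A (2 * A), c ≤ f y := by
    rintro y ⟨hyA, hy2A⟩
    have hy1 : (1 : ℝ) ≤ y := le_trans hA1 hyA
    have hy0 : (0 : ℝ) < y := by linarith
    have hv := hv_eq y hy1
    have hyα_pos : 0 < y ^ (-α) := Real.rpow_pos_of_pos hy0 _
    have hyA' : y ^ (-α) ≤ A ^ (-α) :=
      Real.rpow_le_rpow_of_nonpos hA0 hyA (by linarith)
    have ht_ub : T * y ^ (-α) ≤ 1 := by
      calc T * y ^ (-α) ≤ T * A ^ (-α) := mul_le_mul_of_nonneg_left hyA' hT0.le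
        _ = 1 := by rw [hAinv, mul_inv_cancel₀ hT0.ne']
    have ht_lb : (2 : ℝ) ^ (-α) ≤ T * y ^ (-α) := by
      have h2A0 : (0 : ℝ) < 2 * A := by linarith
      have h1 : (2 * A) ^ (-α) ≤ y ^ (-α) :=
        Real.rpow_le_rpow_of_nonpos hy0 hy2A (by linarith)
      have h2 : ((2 : ℝ) * A) ^ (-α) = (2 : ℝ) ^ (-α) * A ^ (-α) :=
        Real.mul_rpow (by norm_num) hA0.le
      calc (2 : ℝ) ^ (-α) = (2 : ℝ) ^ (-α) * (A ^ (-α) * T) := by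
            rw [hAinv, inv_mul_cancel₀ hT0.ne', mul_one]
        _ = T * ((2 * A) ^ (-α)) := by rw [h2]; ring
        _ ≤ T * y ^ (-α) := mul_le_mul_of_nonneg_left h1 hT0.le
    have hπ : (1 : ℝ) ≤ π := by linarith [Real.pi_gt_three]
    have htcos : Real.cos (T * y ^ (-α)) ≤ Real.cos ((2 : ℝ) ^ (-α)) :=
      Real.cos_le_cos_of_nonneg_of_le_pi (by positivity) (le_trans ht_ub hπ) ht_lb
    have hcos_eq : Real.cos (θ * (ρ ^ e1 * hatv1 α y)) = Real.cos (T * y ^ (-α)) := by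
      rw [hv, ← Real.cos_abs (θ * (ρ ^ e1 * y ^ (-α))), abs_mul,
        abs_of_nonneg (mul_nonneg hρe1.le hyα_pos.le), hT]
      congr 1; ring
    have hexp : Real.exp (-(ε ^ (-α))) ≤ Real.exp (-(ρ * hatv1 α y)) := by
      apply Real.exp_le_exp.mpr
      rw [hv]
      have h1 : ρ * y ^ (-α) ≤ ρ * A ^ (-α) := mul_le_mul_of_nonneg_left hyA' hρ0.le
      have h2 : ρ * A ^ (-α) = ρ / T := by rw [hAinv, div_eq_mul_inv]
      have h3 : ρ / T ≤ ε⁻¹ := by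
        rw [div_le_iff₀ hT0]
        calc ρ = ε⁻¹ * (ε * ρ) := by field_simp
          _ ≤ ε⁻¹ * T := mul_le_mul_of_nonneg_left hεT (by positivity)
      have h4 : ε⁻¹ ≤ ε ^ (-α) := by
        rw [show (ε : ℝ)⁻¹ = ε ^ (-1 : ℝ) from (Real.rpow_neg_one ε).symm]
        exact Real.rpow_le_rpow_of_exponent_ge hε₀ hε₁ (by linarith)
      linarith
    have h1cos : 1 - Real.cos ((2 : ℝ) ^ (-α)) ≤ 1 - Real.cos (θ * (ρ ^ e1 * hatv1 α y)) := by
      rw [hcos_eq]; linarith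
    have h1cos0 : (0 : ℝ) ≤ 1 - Real.cos ((2 : ℝ) ^ (-α)) := by
      have := Real.cos_le_one ((2 : ℝ) ^ (-α)); linarith
    calc c = (1 - Real.cos ((2 : ℝ) ^ (-α))) * Real.exp (-(ε ^ (-α))) := hc
      _ ≤ (1 - Real.cos (θ * (ρ ^ e1 * hatv1 α y))) * Real.exp (-(ρ * hatv1 α y)) :=
          mul_le_mul h1cos hexp (Real.exp_nonneg _) (by linarith)
      _ = f y := by rw [hf]
  have hvol : (volume (Set.Icc A (2 * A))).toReal = A := by
    rw [Real.volume_Icc, ENNReal.toReal_ofReal (by linarith)]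
    ring
  have step1 : c * A ≤ ∫ y in Set.Icc A (2 * A), f y := by
    have := setIntegral_ge_of_const_le_real measurableSet_Icc
      (by rw [Real.volume_Icc]; exact ENNReal.ofReal_ne_top) hlb hint.integrableOn
    rwa [measureReal_def, hvol] at this
  have step2 : (∫ y in Set.Icc A (2 * A), f y) ≤ ∫ y, f y :=
    setIntegral_le_integral hint (ae_of_all _ hf_nonneg)
  have hRHS : c * ρ ^ ((2 * α - 1) / (2 * α ^ 2)) * |θ| ^ (1 / α) = c * A := by
    rw [hA, hT, Real.mul_rpow (abs_nonneg θ) hρe1.le, ← Real.rpow_mul hρ0.le]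
    rw [show e1 * (1 / α) = (2 * α - 1) / (2 * α ^ 2) by rw [he1, div_mul_div_comm, mul_one]; congr 1; ring]
    ring
  rw [ge_iff_le, hRHS]
  exact le_trans step1 step2
end
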